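/- arXiv:1205.2425 — 7 statements merged into one kernel-verified Lean document; each statement's English description precedes it below -/
import Mathlib

section
/- The minimum number of adjacent-transposition moves needed to transform one binary string into another with the same multiset of symbols equals the sum over all i of |p_i − q_i|, where p_i and q_i are the positions of the i-th one in the two strings respectively. -/
/-- One move: swap two adjacent distinct symbols. -/
def SwapStep (s t : List Bool) : Prop :=
  ∃ (l r : List Bool) (a b : Bool), a ≠ b ∧
    s = l ++ [a, b] ++ r ∧ t = l ++ [b, a] ++ r

/-- The sorted list of positions of ones of a binary string. -/
def onePositions (s : List Bool) : List ℕ :=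
  (List.range s.length).filter (fun i => s.getD i false = true)


lemma onePositions_nil : onePositions [] = [] := rfl

lemma onePositions_cons (a : Bool) (s : List Bool) :
    onePositions (a :: s) = (if a then [0] else []) ++ (onePositions s).map (· + 1) := by
  simp only [onePositions, List.length_cons, List.range_succ_eq_map, List.filter_cons,
    List.filter_map]
  cases a <;> simp [Function.comp_def, List.map_map]
lemma onePositions_append (u v : List Bool) :
    onePositions (u ++ v) = onePositions u ++ (onePositions v).map (· + u.length) := by
  induction u with
  | nil => simp [onePositions_nil]
  | cons a u ih =>
    simp only [List.cons_append, onePositions_cons, ih, List.map_append, List.map_map,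
      List.length_cons, List.append_assoc]
    cases a <;> simp [Function.comp_def] <;> intro x _ <;> omega

lemma mem_onePositions {i : ℕ} {s : List Bool} :
    i ∈ onePositions s ↔ i < s.length ∧ s.getD i false = true := by
  simp [onePositions, List.mem_filter]

lemma pairwise_onePositions (s : List Bool) : (onePositions s).Pairwise (· < ·) :=
  List.pairwise_lt_range.filter _

lemma length_onePositions (s : List Bool) : (onePositions s).length = s.count true := by
  induction s with
  | nil => rfl
  | cons a s ih => cases a <;> simp [onePositions_cons, ih, List.count_cons]
lemma zipsum_le (f : ℕ × ℕ → ℕ) (x y : ℕ) (h : ∀ q, f (x, q) ≤ f (y, q) + 1) :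
    ∀ (A Q B : List ℕ),
      (((A ++ x :: B).zip Q).map f).sum ≤ (((A ++ y :: B).zip Q).map f).sum + 1 := by
  intro A
  induction A with
  | nil =>
    intro Q B
    cases Q with
    | nil => simp
    | cons q Q => simpa using Nat.add_le_add_right (h q) _ |>.trans (by omega)
  | cons a A ih =>
    intro Q B
    cases Q with
    | nil => simp
    | cons q Q => simpa using Nat.add_le_add_left (by simpa using ih Q B) _ |>.trans (by omega)

lemma zipsum_eq (f : ℕ × ℕ → ℕ) (x y : ℕ) :
    ∀ (A Q B : List ℕ), A.length < Q.length →
      (((A ++ x :: B).zip Q).map f).sum + f (y, Q.getD A.length 0)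
        = (((A ++ y :: B).zip Q).map f).sum + f (x, Q.getD A.length 0) := by
  intro A
  induction A with
  | nil =>
    intro Q B hQ
    cases Q with
    | nil => simp at hQ
    | cons q Q => simp; omega
  | cons a A ih =>
    intro Q B hQ
    cases Q with
    | nil => simp at hQ
    | cons q Q =>
      have := ih Q B (by simpa using hQ)
      simp at this ⊢
      omega

def D (s t : List Bool) : ℕ :=
  (((onePositions s).zip (onePositions t)).map
      (fun x => ((x.1 : ℤ) - (x.2 : ℤ)).natAbs)).sum

lemma D_self (t : List Bool) : D t t = 0 := by
  unfold D
  generalize onePositions t = l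
  induction l with
  | nil => rfl
  | cons a l ih => simpa using ih

lemma swapStep_length {s s' : List Bool} (h : SwapStep s s') : s.length = s'.length := by
  obtain ⟨l, r, a, b, -, rfl, rfl⟩ := h; simp

lemma swapStep_count {s s' : List Bool} (h : SwapStep s s') :
    s.count true = s'.count true := by
  obtain ⟨l, r, a, b, -, rfl, rfl⟩ := h
  cases a <;> cases b <;> simp_all [List.count_append]

lemma onePositions_mid (l r : List Bool) (a b : Bool) :
    onePositions (l ++ [a, b] ++ r) =
      onePositions l ++ ((onePositions [a, b]).map (· + l.length)
        ++ (onePositions r).map (· + (l.length + 2))) := by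
  rw [List.append_assoc, onePositions_append, onePositions_append, List.map_append,
    List.map_map]
  have : ((fun x => x + l.length) ∘ (fun x => x + [a, b].length))
      = (fun x => x + (l.length + 2)) := by
    funext x; simp [Function.comp]; omega
  rw [this]

lemma op_tf : onePositions [true, false] = [0] := by decide
lemma op_ft : onePositions [false, true] = [1] := by decide
lemma D_le_swap {s s' : List Bool} (t : List Bool) (h : SwapStep s s') :
    D s t ≤ D s' t + 1 := by
  obtain ⟨l, r, a, b, hab, rfl, rfl⟩ := h
  unfold D
  rw [onePositions_mid, onePositions_mid]
  have hcases : (a = true ∧ b = false) ∨ (a = false ∧ b = true) := by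
    cases a <;> cases b <;> simp_all
  rcases hcases with ⟨rfl, rfl⟩ | ⟨rfl, rfl⟩ <;>
    simp only [op_tf, op_ft, List.map_cons, List.map_nil, List.cons_append,
      List.nil_append] <;>
    exact zipsum_le _ _ _ (fun q => by simp only []; omega) _ _ _
lemma D_le_steps (t : List Bool) : ∀ m (f : ℕ → List Bool), f m = t →
    (∀ i < m, SwapStep (f i) (f (i + 1))) → D (f 0) t ≤ m := by
  intro m
  induction m with
  | zero => intro f hm _; rw [hm]; simp [D_self]
  | succ m ih =>
    intro f hm hs
    have h1 : D (f 1) t ≤ m := ih (fun i => f (i + 1)) hm (fun i hi => hs (i + 1) (by omega))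
    have h2 : D (f 0) t ≤ D (f 1) t + 1 := D_le_swap t (hs 0 (by omega))
    omega

lemma eq_of_onePositions_eq {s t : List Bool} (hlen : s.length = t.length)
    (h : onePositions s = onePositions t) : s = t := by
  apply List.ext_getElem hlen
  intro i hi hi'
  have key : (s[i] = true) ↔ (t[i] = true) := by
    constructor
    · intro hx
      have : i ∈ onePositions t := by
        rw [← h, mem_onePositions]
        exact ⟨hi, by rwa [List.getD_eq_getElem _ _ hi]⟩
      rw [mem_onePositions, List.getD_eq_getElem _ _ hi'] at this
      exact this.2
    · intro hx
      have : i ∈ onePositions s := by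
        rw [h, mem_onePositions]
        exact ⟨hi', by rwa [List.getD_eq_getElem _ _ hi']⟩
      rw [mem_onePositions, List.getD_eq_getElem _ _ hi] at this
      exact this.2
  cases hs : s[i] <;> cases ht : t[i] <;> simp_all

lemma onePositions_eq_of_D_zero {s t : List Bool}
    (hol : (onePositions s).length = (onePositions t).length) (h : D s t = 0) :
    onePositions s = onePositions t := by
  apply List.ext_getElem hol
  intro i hi hi'
  unfold D at h
  have hz : (((onePositions s).zip (onePositions t)).map
      (fun x => ((x.1 : ℤ) - (x.2 : ℤ)).natAbs))[i]'(by simpa [hol] using hi) = 0 := by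
    have hle := List.single_le_sum (l := ((onePositions s).zip (onePositions t)).map
      (fun x => ((x.1 : ℤ) - (x.2 : ℤ)).natAbs)) (fun x _ => Nat.zero_le x) _
      (List.getElem_mem (by simpa [hol] using hi))
    omega
  rw [List.getElem_map, List.getElem_zip] at hz
  omega
lemma D_eq_zero_of_op_eq {s t : List Bool} (h : onePositions s = onePositions t) :
    D s t = 0 := by
  unfold D
  rw [h]
  generalize onePositions t = l
  induction l with
  | nil => rfl
  | cons a l ih => simpa using ih

lemma index_unique {P : List ℕ} (hP : P.Pairwise (· < ·)) {K kA : ℕ}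
    (hK : K < P.length) (hkA : kA < P.length) (h : P[K] = P[kA]) : K = kA := by
  have hm := List.pairwise_iff_getElem.mp hP
  rcases lt_trichotomy K kA with hlt | he | hgt
  · exact absurd (hm K kA hK hkA hlt) (by omega)
  · exact he
  · exact absurd (hm kA K hkA hK hgt) (by omega)

lemma getElem_mid (A : List ℕ) (x : ℕ) (C : List ℕ) :
    (A ++ x :: C)[A.length]'(by simp) = x := by
  rw [List.getElem_append_right (le_refl _)]
  simp
lemma swap_right {s t : List Bool} (hlen : s.length = t.length)
    (hol : (onePositions s).length = (onePositions t).length)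
    {K : ℕ} (hK : K < (onePositions s).length)
    (hlt : (onePositions s).getD K 0 < (onePositions t).getD K 0)
    (hzero : s.getD ((onePositions s).getD K 0 + 1) false = false) :
    ∃ s', SwapStep s s' ∧ D s' t + 1 = D s t := by
  set j := (onePositions s).getD K 0 with hjdef
  have hPK : (onePositions s)[K] = j := (List.getD_eq_getElem _ _ hK).symm
  have hjmem : j ∈ onePositions s := hPK ▸ List.getElem_mem hK
  have hjs := mem_onePositions.mp hjmem
  have hKQ : K < (onePositions t).length := hol ▸ hK
  have hqmem : (onePositions t).getD K 0 ∈ onePositions t := by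
    rw [List.getD_eq_getElem _ _ hKQ]; exact List.getElem_mem hKQ
  have hqlt := (mem_onePositions.mp hqmem).1
  have hj1 : j + 1 < s.length := by omega
  have hsj : s[j]'(by omega) = true := by
    rw [← List.getD_eq_getElem s false (by omega : j < s.length)]; exact hjs.2
  have hsj1 : s[j + 1]'hj1 = false := by
    rw [← List.getD_eq_getElem s false hj1]; exact hzero
  have hdec : s = s.take j ++ [true, false] ++ s.drop (j + 2) := by
    conv_lhs => rw [← List.take_append_drop j s,
      List.drop_eq_getElem_cons (by omega : j < s.length),
      List.drop_eq_getElem_cons (by omega : j + 1 < s.length)]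
    simp [hsj, hsj1]
  have hLlen : (s.take j).length = j := by rw [List.length_take]; omega
  have hss' : SwapStep s (s.take j ++ [false, true] ++ s.drop (j + 2)) :=
    ⟨s.take j, s.drop (j + 2), true, false, by simp, hdec, rfl⟩
  have opS : onePositions s = onePositions (s.take j)
      ++ (j :: (onePositions (s.drop (j + 2))).map (· + (j + 2))) := by
    conv_lhs => rw [hdec]
    rw [onePositions_mid, op_tf, hLlen]
    simp
  have opS' : onePositions (s.take j ++ [false, true] ++ s.drop (j + 2))
      = onePositions (s.take j)
      ++ ((j + 1) :: (onePositions (s.drop (j + 2))).map (· + (j + 2))) := by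
    rw [onePositions_mid, op_ft, hLlen]
    simp [Nat.add_comm]
  set A := onePositions (s.take j)
  set C := (onePositions (s.drop (j + 2))).map (· + (j + 2))
  have hkA : A.length < (onePositions s).length := by rw [opS]; simp
  have hPkA : (onePositions s)[A.length]'hkA = j := by
    simp only [opS]; exact getElem_mid A j C
  have hKA : K = A.length :=
    index_unique (pairwise_onePositions s) hK hkA (by rw [hPK, hPkA])
  refine ⟨_, hss', ?_⟩
  unfold D
  rw [opS', opS]
  have hz := zipsum_eq (fun x => ((x.1 : ℤ) - (x.2 : ℤ)).natAbs) (j + 1) j A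
    (onePositions t) C (by omega)
  simp only at hz
  rw [← hKA] at hz
  omega
lemma swap_left {s t : List Bool} (hlen : s.length = t.length)
    (hol : (onePositions s).length = (onePositions t).length)
    {K : ℕ} (hK : K < (onePositions s).length)
    (hlt : (onePositions t).getD K 0 < (onePositions s).getD K 0)
    (hzero : s.getD ((onePositions s).getD K 0 - 1) false = false) :
    ∃ s', SwapStep s s' ∧ D s' t + 1 = D s t := by
  have hPK : (onePositions s)[K] = (onePositions s).getD K 0 :=
    (List.getD_eq_getElem _ _ hK).symm
  have hjmem : (onePositions s).getD K 0 ∈ onePositions s := hPK ▸ List.getElem_mem hK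
  have hjs := mem_onePositions.mp hjmem
  obtain ⟨j0, hj0⟩ : ∃ j0, (onePositions s).getD K 0 = j0 + 1 :=
    ⟨(onePositions s).getD K 0 - 1, by omega⟩
  rw [hj0] at hPK hjs hzero hlt
  simp only [Nat.add_sub_cancel] at hzero
  have hj1 : j0 + 1 < s.length := hjs.1
  have hsj : s[j0 + 1]'hj1 = true := by
    rw [← List.getD_eq_getElem s false hj1]; exact hjs.2
  have hsj0 : s[j0]'(by omega) = false := by
    rw [← List.getD_eq_getElem s false (by omega : j0 < s.length)]; exact hzero
  have hdec : s = s.take j0 ++ [false, true] ++ s.drop (j0 + 2) := by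
    conv_lhs => rw [← List.take_append_drop j0 s,
      List.drop_eq_getElem_cons (by omega : j0 < s.length),
      List.drop_eq_getElem_cons (by omega : j0 + 1 < s.length)]
    simp [hsj, hsj0]
  have hLlen : (s.take j0).length = j0 := by rw [List.length_take]; omega
  have hss' : SwapStep s (s.take j0 ++ [true, false] ++ s.drop (j0 + 2)) :=
    ⟨s.take j0, s.drop (j0 + 2), false, true, by simp, hdec, rfl⟩
  have opS : onePositions s = onePositions (s.take j0)
      ++ ((j0 + 1) :: (onePositions (s.drop (j0 + 2))).map (· + (j0 + 2))) := by
    conv_lhs => rw [hdec]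
    rw [onePositions_mid, op_ft, hLlen]
    simp [Nat.add_comm]
  have opS' : onePositions (s.take j0 ++ [true, false] ++ s.drop (j0 + 2))
      = onePositions (s.take j0)
      ++ (j0 :: (onePositions (s.drop (j0 + 2))).map (· + (j0 + 2))) := by
    rw [onePositions_mid, op_tf, hLlen]
    simp
  set A := onePositions (s.take j0)
  set C := (onePositions (s.drop (j0 + 2))).map (· + (j0 + 2))
  have hkA : A.length < (onePositions s).length := by rw [opS]; simp
  have hPkA : (onePositions s)[A.length]'hkA = j0 + 1 := by
    simp only [opS]; exact getElem_mid A (j0 + 1) C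
  have hKA : K = A.length :=
    index_unique (pairwise_onePositions s) hK hkA (by rw [hPK, hPkA])
  refine ⟨_, hss', ?_⟩
  unfold D
  rw [opS', opS]
  have hz := zipsum_eq (fun x => ((x.1 : ℤ) - (x.2 : ℤ)).natAbs) j0 (j0 + 1) A
    (onePositions t) C (by omega)
  simp only at hz
  rw [← hKA] at hz
  omega
lemma exists_dec_swap {s t : List Bool} (hlen : s.length = t.length)
    (hcount : s.count true = t.count true) (hD : D s t ≠ 0) :
    ∃ s', SwapStep s s' ∧ D s' t + 1 = D s t := by
  have hol : (onePositions s).length = (onePositions t).length := by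
    rw [length_onePositions, length_onePositions]; exact hcount
  have hm := List.pairwise_iff_getElem.mp (pairwise_onePositions s)
  have hm' := List.pairwise_iff_getElem.mp (pairwise_onePositions t)
  obtain ⟨k0, hk0, hne⟩ : ∃ k, k < (onePositions s).length ∧
      (onePositions s).getD k 0 ≠ (onePositions t).getD k 0 := by
    by_contra h
    push_neg at h
    apply hD
    apply D_eq_zero_of_op_eq
    apply List.ext_getElem hol
    intro i hi hi'
    have := h i hi
    rwa [List.getD_eq_getElem _ _ hi, List.getD_eq_getElem _ _ hi'] at this
  -- generic facts
  have memP : ∀ k, k < (onePositions s).length →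
      (onePositions s).getD k 0 < s.length ∧
        s.getD ((onePositions s).getD k 0) false = true := by
    intro k hk
    have : (onePositions s).getD k 0 ∈ onePositions s := by
      rw [List.getD_eq_getElem _ _ hk]; exact List.getElem_mem hk
    exact mem_onePositions.mp this
  have memQ : ∀ k, k < (onePositions t).length →
      (onePositions t).getD k 0 < t.length := by
    intro k hk
    have : (onePositions t).getD k 0 ∈ onePositions t := by
      rw [List.getD_eq_getElem _ _ hk]; exact List.getElem_mem hk
    exact (mem_onePositions.mp this).1
  rcases hne.lt_or_gt with hlt | hgt
  · -- move a one to the right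
    set p : ℕ → Prop := fun k => k < (onePositions s).length ∧
      (onePositions s).getD k 0 < (onePositions t).getD k 0 with hp
    have hpK : p (Nat.findGreatest p (onePositions s).length) :=
      Nat.findGreatest_spec (le_of_lt hk0) ⟨hk0, hlt⟩
    set K := Nat.findGreatest p (onePositions s).length
    set j := (onePositions s).getD K 0 with hjdef
    have hKlt : K < (onePositions s).length := hpK.1
    have hjQ : j < (onePositions t).getD K 0 := hpK.2
    have hQlt : (onePositions t).getD K 0 < t.length := memQ K (hol ▸ hKlt)
    have hzero : s.getD (j + 1) false = false := by
      by_contra hz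
      have hz' : s.getD (j + 1) false = true := by
        revert hz; cases s.getD (j + 1) false <;> simp
      have hmem : j + 1 ∈ onePositions s := mem_onePositions.mpr ⟨by omega, hz'⟩
      obtain ⟨k', hk', hPk'⟩ := List.mem_iff_getElem.mp hmem
      have hPK : (onePositions s)[K] = j := (List.getD_eq_getElem _ _ hKlt).symm
      have hKk' : K < k' := by
        rcases lt_trichotomy k' K with h1 | h1 | h1
        · have := hm k' K hk' hKlt h1; omega
        · subst h1; omega
        · exact h1
      have hQQ : (onePositions t).getD K 0 < (onePositions t).getD k' 0 := by
        have := hm' K k' (hol ▸ hKlt) (hol ▸ hk') hKk'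
        rwa [← List.getD_eq_getElem _ 0 (hol ▸ hKlt), ← List.getD_eq_getElem _ 0 (hol ▸ hk')]
          at this
      have hpk' : p k' := by
        refine ⟨hk', ?_⟩
        rw [List.getD_eq_getElem _ 0 hk', hPk']
        omega
      exact Nat.findGreatest_is_greatest hKk' (le_of_lt hk') hpk'
    exact swap_right hlen hol hKlt hjQ hzero
  · -- move a one to the left
    have hex : ∃ k, k < (onePositions s).length ∧
        (onePositions t).getD k 0 < (onePositions s).getD k 0 := ⟨k0, hk0, hgt⟩
    have hpK := Nat.find_spec hex
    set K := Nat.find hex with hKdef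
    set j := (onePositions s).getD K 0 with hjdef
    have hKlt : K < (onePositions s).length := hpK.1
    have hQj : (onePositions t).getD K 0 < j := hpK.2
    have hjs := memP K hKlt
    have hzero : s.getD (j - 1) false = false := by
      by_contra hz
      have hz' : s.getD (j - 1) false = true := by
        revert hz; cases s.getD (j - 1) false <;> simp
      have hmem : j - 1 ∈ onePositions s := mem_onePositions.mpr ⟨by omega, hz'⟩
      obtain ⟨k', hk', hPk'⟩ := List.mem_iff_getElem.mp hmem
      have hPK : (onePositions s)[K] = j := (List.getD_eq_getElem _ _ hKlt).symm
      have hKk' : k' < K := by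
        rcases lt_trichotomy k' K with h1 | h1 | h1
        · exact h1
        · subst h1; omega
        · have := hm K k' hKlt hk' h1; omega
      have hQQ : (onePositions t).getD k' 0 < (onePositions t).getD K 0 := by
        have := hm' k' K (hol ▸ hk') (hol ▸ hKlt) hKk'
        rwa [← List.getD_eq_getElem _ 0 (hol ▸ hk'), ← List.getD_eq_getElem _ 0 (hol ▸ hKlt)]
          at this
      refine Nat.find_min hex hKk' ⟨hk', ?_⟩
      rw [List.getD_eq_getElem _ 0 hk', hPk']
      omega
    exact swap_left hlen hol hKlt hQj hzero
lemma reach (t : List Bool) : ∀ d (s : List Bool), s.length = t.length →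
    s.count true = t.count true → D s t = d →
    ∃ f : ℕ → List Bool, f 0 = s ∧ f d = t ∧ ∀ i < d, SwapStep (f i) (f (i + 1)) := by
  intro d
  induction d with
  | zero =>
    intro s h1 h2 h3
    have hop : onePositions s = onePositions t :=
      onePositions_eq_of_D_zero (by rw [length_onePositions, length_onePositions]; exact h2) h3
    have := eq_of_onePositions_eq h1 hop
    subst this
    exact ⟨fun _ => s, rfl, rfl, fun i hi => absurd hi (by omega)⟩
  | succ d ih =>
    intro s h1 h2 h3
    obtain ⟨s', hstep, hdec⟩ := exists_dec_swap h1 h2 (by omega)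
    have h1' : s'.length = t.length := by rw [← swapStep_length hstep]; exact h1
    have h2' : s'.count true = t.count true := by rw [← swapStep_count hstep]; exact h2
    obtain ⟨f, hf0, hfd, hfs⟩ := ih s' h1' h2' (by omega)
    refine ⟨fun i => if i = 0 then s else f (i - 1), by simp, by simp [hfd], fun i hi => ?_⟩
    cases i with
    | zero => simpa [hf0] using hstep
    | succ n =>
      simp only [Nat.succ_ne_zero, if_false, Nat.add_sub_cancel, Nat.succ_sub_one]
      exact hfs n (by omega)


/-- The minimum number of adjacent transposition moves between two binary
strings of the same length with the same number of ones equals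
`∑ i |p i - q i|` where `p, q` are the sorted position lists of their ones. -/
theorem stmt2 (s t : List Bool) (hlen : s.length = t.length)
    (hcount : s.count true = t.count true) :
    IsLeast {m : ℕ | ∃ f : ℕ → List Bool,
        f 0 = s ∧ f m = t ∧ ∀ i < m, SwapStep (f i) (f (i + 1))}
      ((((onePositions s).zip (onePositions t)).map
          (fun x => ((x.1 : ℤ) - (x.2 : ℤ)).natAbs)).sum) := by
  constructor
  · obtain ⟨f, h0, hd, hs⟩ := reach t (D s t) s hlen hcount rfl
    exact ⟨f, h0, hd, hs⟩
  · intro m hm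
    obtain ⟨f, h0, hd, hs⟩ := hm
    have := D_le_steps t m f hd hs
    rw [h0] at this
    exact this
end

section
/- The flip distance between the left-inclined and right-inclined triangulations of a channel with chains of length n+1 (so n edges per chain) is at least n^2. For n = 6 this gives a lower bound of 36 flips. -/
/-- State of a triangulation of a channel with `n` edges per chain: the apex
(a vertex of the opposite chain, among `n + 1` vertices) of the triangle based
on each upper-chain edge and on each lower-chain edge.  A flip changes the apex
of exactly one upper-edge triangle and one lower-edge triangle, each by one
position along the opposite chain. -/
def ChannelFlip (n : ℕ) (s t : (Fin n → Fin (n + 1)) × (Fin n → Fin (n + 1))) : Prop :=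
  ∃ i j : Fin n,
    (∀ i', i' ≠ i → s.1 i' = t.1 i') ∧
    (∀ j', j' ≠ j → s.2 j' = t.2 j') ∧
    ((t.1 i : ℤ) - (s.1 i : ℤ)).natAbs = 1 ∧
    ((t.2 j : ℤ) - (s.2 j : ℤ)).natAbs = 1

/-- The potential: sum of upper apexes minus sum of lower apexes. -/
def chanPhi (n : ℕ) (s : (Fin n → Fin (n + 1)) × (Fin n → Fin (n + 1))) : ℤ :=
  (∑ i, (s.1 i : ℤ)) - ∑ j, (s.2 j : ℤ)

lemma chanPhi_step (n : ℕ) (s t : (Fin n → Fin (n + 1)) × (Fin n → Fin (n + 1)))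
    (h : ChannelFlip n s t) : |chanPhi n t - chanPhi n s| ≤ 2 := by
  obtain ⟨i, j, h1, h2, h3, h4⟩ := h
  have e1 : (∑ i', (t.1 i' : ℤ)) - ∑ i', (s.1 i' : ℤ)
      = (t.1 i : ℤ) - (s.1 i : ℤ) := by
    rw [← Finset.sum_sub_distrib]
    rw [Finset.sum_eq_single i]
    · intro b _ hb
      rw [h1 b hb]; ring
    · intro hb; exact absurd (Finset.mem_univ i) hb
  have e2 : (∑ j', (t.2 j' : ℤ)) - ∑ j', (s.2 j' : ℤ)
      = (t.2 j : ℤ) - (s.2 j : ℤ) := by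
    rw [← Finset.sum_sub_distrib]
    rw [Finset.sum_eq_single j]
    · intro b _ hb
      rw [h2 b hb]; ring
    · intro hb; exact absurd (Finset.mem_univ j) hb
  have a3 : |(t.1 i : ℤ) - (s.1 i : ℤ)| = 1 := by
    rw [Int.abs_eq_natAbs, h3]; rfl
  have a4 : |(t.2 j : ℤ) - (s.2 j : ℤ)| = 1 := by
    rw [Int.abs_eq_natAbs, h4]; rfl
  have : chanPhi n t - chanPhi n s
      = ((t.1 i : ℤ) - (s.1 i : ℤ)) - ((t.2 j : ℤ) - (s.2 j : ℤ)) := by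
    unfold chanPhi
    rw [← e1, ← e2]; ring
  rw [this]
  calc |((t.1 i : ℤ) - (s.1 i : ℤ)) - ((t.2 j : ℤ) - (s.2 j : ℤ))|
      ≤ |(t.1 i : ℤ) - (s.1 i : ℤ)| + |(t.2 j : ℤ) - (s.2 j : ℤ)| := abs_sub _ _
    _ ≤ 2 := by rw [a3, a4]; norm_num

/-- The flip distance between the left-inclined triangulation (all upper apexes
at the last lower vertex, all lower apexes at the first upper vertex) and the
right-inclined triangulation (the mirror image) of a channel with `n` edges per
chain is at least `n ^ 2` (36 for `n = 6`). -/
theorem stmt4 (n m : ℕ)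
    (f : ℕ → (Fin n → Fin (n + 1)) × (Fin n → Fin (n + 1)))
    (h0 : f 0 = (fun _ => Fin.last n, fun _ => 0))
    (hm : f m = (fun _ => 0, fun _ => Fin.last n))
    (hstep : ∀ i < m, ChannelFlip n (f i) (f (i + 1))) :
    n ^ 2 ≤ m := by
  have key : ∀ k ≤ m, |chanPhi n (f k) - chanPhi n (f 0)| ≤ 2 * k := by
    intro k hk
    induction k with
    | zero => simp
    | succ k ih =>
      have hk' : k ≤ m := Nat.le_of_succ_le hk
      calc |chanPhi n (f (k+1)) - chanPhi n (f 0)|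
          ≤ |chanPhi n (f (k+1)) - chanPhi n (f k)| + |chanPhi n (f k) - chanPhi n (f 0)| := by
            have := abs_sub_abs_le_abs_sub (chanPhi n (f (k+1)) - chanPhi n (f 0))
              (chanPhi n (f k) - chanPhi n (f 0))
            calc |chanPhi n (f (k+1)) - chanPhi n (f 0)|
                = |(chanPhi n (f (k+1)) - chanPhi n (f k)) + (chanPhi n (f k) - chanPhi n (f 0))| := by
                  ring_nf
              _ ≤ _ := abs_add_le _ _
        _ ≤ 2 + 2 * k := by
            have h1 := chanPhi_step n (f k) (f (k+1)) (hstep k (Nat.lt_of_succ_le hk))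
            have h2 := ih hk'
            omega
        _ = 2 * (k + 1 : ℕ) := by push_cast; ring
  have h0' : chanPhi n (f 0) = (n : ℤ) * n := by
    rw [h0]; unfold chanPhi; simp [Fin.last]
  have hm' : chanPhi n (f m) = -((n : ℤ) * n) := by
    rw [hm]; unfold chanPhi; simp [Fin.last]
  have := key m le_rfl
  rw [hm', h0'] at this
  have habs : |(-((n : ℤ) * n)) - (n : ℤ) * n| = 2 * (n : ℤ) * n := by
    have : (-((n : ℤ) * n)) - (n : ℤ) * n = -(2 * n * n) := by ring
    rw [this, abs_neg, abs_of_nonneg (by positivity)]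
  rw [habs] at this
  have : (n : ℤ) * n ≤ m := by linarith
  have : (n : ℕ) * n ≤ m := by exact_mod_cast this
  calc n ^ 2 = n * n := sq n
    _ ≤ m := this
end

section
/- Abstract model of the capped channel: suppose 2n tokens must each move from a start position to an end position, where a direct route costs n unit moves per token, but a token may alternatively take a shortcut costing 2 special operations; each regular operation advances two tokens (one of each type) by one unit, and each special operation serves one token. Then the minimum total number of operations is 2·2n when all tokens use shortcuts, i.e., 24 operations when n = 6. -/
/-- Abstract model of the capped channel: of the `n` tokens of each of the two
types, `kU` (resp. `kL`) take the shortcut, at a cost of 2 special operations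
per token; the remaining tokens each need `n` unit moves, and each regular
operation advances one remaining token of each type by one unit, so the
regular operations number at least `n * max (n - kU) (n - kL)` (and this is
attainable).  For `n ≥ 4`, the minimum total number of operations is
`2 * (2 * n)` (i.e. 24 when `n = 6`), attained when all tokens use shortcuts. -/
theorem stmt6 (n : ℕ) (hn : 4 ≤ n) :
    IsLeast {c : ℕ | ∃ kU kL : ℕ, kU ≤ n ∧ kL ≤ n ∧
        c = 2 * (kU + kL) + n * max (n - kU) (n - kL)}
      (2 * (2 * n)) := by
  constructor
  · exact ⟨n, n, le_refl n, le_refl n, by simp; ring⟩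
  · rintro c ⟨kU, kL, hU, hL, rfl⟩
    have hmax : max (n - kU) (n - kL) = n - min kU kL := by omega
    rw [hmax]
    have h1 : 4 * (n - min kU kL) ≤ n * (n - min kU kL) :=
      Nat.mul_le_mul_right _ hn
    omega
end

section
/- In the capped-channel flip model, any flip sequence transforming the left-inclined to the right-inclined triangulation has length at least 24: each of the 12 triangles either requires at least 2 type-1 flips (via the cap) or contributes at least 3 type-2 flips (moving its apex 6 positions at one position per flip, two apexes per flip). -/
/-- Capped-channel flip model: there are 12 triangles.  For triangle `i`,
`f1 i` is the number of type-1 flips (moving only that triangle's apex, via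
the cap) applied to it, and `f2 i` is the number of type-2 flips moving its
apex along the opposite chain.  Each triangle either uses the cap, requiring
at least 2 type-1 flips, or has its apex moved through 6 positions at one
position per type-2 flip, so `f2 i ≥ 6`.  A type-2 flip moves the apexes of
exactly two triangles, so if `m` is the number of type-2 flips then
`∑ i, f2 i ≤ 2 * m`, and the total number of flips is `N = ∑ i, f1 i + m`.
Then `N ≥ 24`. -/
theorem stmt7 (N m : ℕ) (f1 f2 : Fin 12 → ℕ)
    (hchoice : ∀ i, 2 ≤ f1 i ∨ 6 ≤ f2 i)
    (htotal : N = (∑ i, f1 i) + m)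
    (htype2 : ∑ i, f2 i ≤ 2 * m) :
    24 ≤ N := by
  have key : 144 ≤ ∑ i : Fin 12, (6 * f1 i + 2 * f2 i) := by
    have h : ∀ i : Fin 12, 12 ≤ 6 * f1 i + 2 * f2 i := by
      intro i
      rcases hchoice i with h | h <;> omega
    calc (144 : ℕ) = ∑ _i : Fin 12, 12 := by simp
      _ ≤ _ := Finset.sum_le_sum fun i _ => h i
  rw [Finset.sum_add_distrib, ← Finset.mul_sum, ← Finset.mul_sum] at key
  omega
end

section
/- Let G = (V,E) be a graph with cost model: a flip sequence is determined by a set L ⊆ V of unlocked vertices, with cost at least 2|L| + 36|C_L| + 28|E \ C_L|, where C_L is the set of edges of E not covered by L. If G has a vertex cover of size k, then there is a choice of L with cost exactly 2k + 28|E|; conversely, if some L achieves cost at most 2k + 28|E|, then G has a vertex cover of size at most k. Hence the minimum cost is 2·τ(G) + 28|E|, where τ(G) is the minimum vertex cover size. -/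
/-- `S` is a vertex cover of `G`. -/
def IsVertexCover {V : Type*} (G : SimpleGraph V) (S : Finset V) : Prop :=
  ∀ e ∈ G.edgeSet, ∃ v ∈ S, v ∈ e

/-- The number of edges of `G` with neither endpoint in `L` (the uncovered
channels `C_L`). -/
noncomputable def uncov {V : Type*} (G : SimpleGraph V) (L : Finset V) : ℕ :=
  {e ∈ G.edgeSet | ∀ v ∈ e, v ∉ L}.ncard

/-- The cost of the flip strategy determined by unlocking `L`:
`2|L| + 36|C_L| + 28|E \ C_L|`. -/
noncomputable def flipCost {V : Type*} (G : SimpleGraph V) (L : Finset V) : ℕ :=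
  2 * L.card + 36 * uncov G L + 28 * (G.edgeSet.ncard - uncov G L)

open Classical

lemma uncov_le {V : Type*} [Fintype V] (G : SimpleGraph V) (L : Finset V) :
    uncov G L ≤ G.edgeSet.ncard := by
  apply Set.ncard_le_ncard (fun e he => he.1) (Set.toFinite _)

lemma uncov_of_cover {V : Type*} [Fintype V] (G : SimpleGraph V) (L : Finset V)
    (h : IsVertexCover G L) : uncov G L = 0 := by
  rw [uncov, Set.ncard_eq_zero]
  ext e
  simp only [Set.mem_setOf_eq, Set.mem_empty_iff_false, iff_false, not_and]
  intro he hn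
  obtain ⟨v, hv, hve⟩ := h e he
  exact hn v hve hv

lemma flipCost_of_cover {V : Type*} [Fintype V] (G : SimpleGraph V) (L : Finset V)
    (h : IsVertexCover G L) : flipCost G L = 2 * L.card + 28 * G.edgeSet.ncard := by
  have := uncov_le G L
  rw [flipCost, uncov_of_cover G L h]; omega

lemma cover_from_L {V : Type*} [Fintype V] [DecidableEq V] (G : SimpleGraph V)
    (L : Finset V) :
    ∃ S : Finset V, IsVertexCover G S ∧ S.card ≤ L.card + 2 * uncov G L := by
  set U : Set (Sym2 V) := {e ∈ G.edgeSet | ∀ v ∈ e, v ∉ L} with hU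
  have hUfin : U.Finite := Set.toFinite _
  set Uf : Finset (Sym2 V) := hUfin.toFinset with hUf
  have hcard : uncov G L = Uf.card := by
    rw [uncov, Set.ncard_eq_toFinset_card _ hUfin]
  refine ⟨L ∪ Uf.biUnion (fun e => {(Quot.out e).1, (Quot.out e).2}), ?_, ?_⟩
  · intro e he
    by_cases hc : ∃ v ∈ L, v ∈ e
    · obtain ⟨v, hv, hve⟩ := hc
      exact ⟨v, Finset.mem_union_left _ hv, hve⟩
    · push_neg at hc
      have heU : e ∈ Uf := by
        rw [hUf, Set.Finite.mem_toFinset]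
        exact ⟨he, fun v hve hvL => hc v hvL hve⟩
      refine ⟨(Quot.out e).1, ?_, Sym2.out_fst_mem e⟩
      exact Finset.mem_union_right _ (Finset.mem_biUnion.2
        ⟨e, heU, by simp⟩)
  · calc _ ≤ L.card + (Uf.biUnion (fun e => {(Quot.out e).1, (Quot.out e).2})).card :=
          Finset.card_union_le _ _
      _ ≤ L.card + ∑ e ∈ Uf, ({(Quot.out e).1, (Quot.out e).2} : Finset V).card := by
          gcongr; exact Finset.card_biUnion_le
      _ ≤ L.card + ∑ _e ∈ Uf, 2 := by
          gcongr with e he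
          exact (Finset.card_insert_le _ _).trans (by simp)
      _ = L.card + 2 * uncov G L := by
          rw [hcard, Finset.sum_const, smul_eq_mul, Nat.mul_comm]

/-- Cost correspondence of the main reduction lemma: a vertex cover of size `k`
yields an `L` of cost exactly `2k + 28|E|`; conversely a choice of `L` of cost
at most `2k + 28|E|` yields a vertex cover of size at most `k`; and the
minimum cost equals `2·τ(G) + 28|E|` where `τ(G)` is the minimum vertex cover
size. -/
theorem stmt10 {V : Type*} [Fintype V] [DecidableEq V] (G : SimpleGraph V)
    (k : ℕ) :
    ((∃ S : Finset V, IsVertexCover G S ∧ S.card = k) →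
        ∃ L : Finset V, flipCost G L = 2 * k + 28 * G.edgeSet.ncard) ∧
    ((∃ L : Finset V, flipCost G L ≤ 2 * k + 28 * G.edgeSet.ncard) →
        ∃ S : Finset V, IsVertexCover G S ∧ S.card ≤ k) ∧
    IsLeast {c : ℕ | ∃ L : Finset V, c = flipCost G L}
      (2 * sInf {m : ℕ | ∃ S : Finset V, IsVertexCover G S ∧ S.card = m} +
        28 * G.edgeSet.ncard) := by
  have univ_cover : IsVertexCover G (Finset.univ : Finset V) := by
    intro e _
    exact ⟨(Quot.out e).1, Finset.mem_univ _, Sym2.out_fst_mem e⟩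
  have hne : {m : ℕ | ∃ S : Finset V, IsVertexCover G S ∧ S.card = m}.Nonempty :=
    ⟨(Finset.univ : Finset V).card, Finset.univ, univ_cover, rfl⟩
  set τ := sInf {m : ℕ | ∃ S : Finset V, IsVertexCover G S ∧ S.card = m} with hτ
  obtain ⟨S₀, hS₀, hS₀card⟩ := Nat.sInf_mem hne
  have flipval : ∀ L : Finset V,
      flipCost G L = 2 * L.card + 8 * uncov G L + 28 * G.edgeSet.ncard := by
    intro L
    have := uncov_le G L
    rw [flipCost]; omega
  refine ⟨?_, ?_, ?_, ?_⟩
  · rintro ⟨S, hS, rfl⟩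
    exact ⟨S, flipCost_of_cover G S hS⟩
  · rintro ⟨L, hL⟩
    obtain ⟨S, hS, hScard⟩ := cover_from_L G L
    refine ⟨S, hS, ?_⟩
    rw [flipval L] at hL
    omega
  · exact ⟨S₀, by rw [flipCost_of_cover G S₀ hS₀, hS₀card]⟩
  · rintro c ⟨L, rfl⟩
    obtain ⟨S, hS, hScard⟩ := cover_from_L G L
    have hτle : τ ≤ S.card := Nat.sInf_le ⟨S, hS, rfl⟩
    rw [flipval L]
    omega
end

section
/- Let G be a graph, v a vertex of G, and construct G' by replacing v with a path v_1, v_2, v_3, where v_1 and v_3 split the edges formerly incident to v. Applying this replacement to each of t designated vertices, the resulting graph has a vertex cover of size at most k + t if and only if G has a vertex cover of size at most k. -/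
/-- The replacement relation: each designated vertex `w ∈ W` is replaced by a
path `v₁, v₂, v₃` (encoded `(w, 0), (w, 1), (w, 2)`), the designated vertices
themselves become isolated, and each edge formerly incident to `w` attaches to
exactly one of `v₁, v₃`, as prescribed by the attachment choice `a` (for an
edge `{u, w}`, `a w u = true` means attach to `v₁`, else to `v₃`). -/
def ReplaceRel {V : Type*} [DecidableEq V] (G : SimpleGraph V) (W : Finset V)
    (a : V → V → Bool) :
    (V ⊕ (↥W × Fin 3)) → (V ⊕ (↥W × Fin 3)) → Prop
  | Sum.inl u, Sum.inl u' => G.Adj u u' ∧ u ∉ W ∧ u' ∉ W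
  | Sum.inl u, Sum.inr (w, i) =>
      u ∉ W ∧ G.Adj u w ∧ i = (if a (w : V) u then 0 else 2)
  | Sum.inr _, Sum.inl _ => False
  | Sum.inr (w, i), Sum.inr (w', j) =>
      ((w : V) = (w' : V) ∧ ((i = 0 ∧ j = 1) ∨ (i = 1 ∧ j = 2))) ∨
      ((w : V) ≠ (w' : V) ∧ G.Adj w w' ∧
        i = (if a (w : V) w' then 0 else 2) ∧
        j = (if a (w' : V) w then 0 else 2))

/-- The graph obtained from `G` by replacing each designated vertex `w ∈ W` by
a three-vertex path, distributing the former edges of `w` among the two path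
endpoints according to `a`. -/
def ReplaceGraph {V : Type*} [DecidableEq V] (G : SimpleGraph V) (W : Finset V)
    (a : V → V → Bool) : SimpleGraph (V ⊕ (↥W × Fin 3)) :=
  SimpleGraph.fromRel (ReplaceRel G W a)

lemma replace_adj_of_rel {V : Type*} [DecidableEq V] (G : SimpleGraph V) (W : Finset V)
    (a : V → V → Bool) {x y : V ⊕ (↥W × Fin 3)} (hne : x ≠ y)
    (h : ReplaceRel G W a x y) : (ReplaceGraph G W a).Adj x y := by
  rw [ReplaceGraph, SimpleGraph.fromRel_adj]
  exact ⟨hne, Or.inl h⟩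

/-- Replacing each of the `t = |W|` designated vertices of `G` by a
three-vertex path: the resulting graph has a vertex cover of size at most
`k + t` if and only if `G` has a vertex cover of size at most `k`. -/
theorem stmt11 {V : Type*} [DecidableEq V] (G : SimpleGraph V) (W : Finset V)
    (a : V → V → Bool) (k : ℕ) :
    (∃ S' : Finset (V ⊕ (↥W × Fin 3)),
        IsVertexCover (ReplaceGraph G W a) S' ∧ S'.card ≤ k + W.card) ↔
    (∃ S : Finset V, IsVertexCover G S ∧ S.card ≤ k) := by
  classical
  constructor
  · rintro ⟨S', hcov, hcard⟩
    set A : Finset V := S'.toLeft.filter (fun u => u ∉ W) with hAdef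
    set P : ↥W → Prop := fun w =>
      Sum.inr (w, (0 : Fin 3)) ∈ S' ∨ Sum.inr (w, (2 : Fin 3)) ∈ S' with hPdef
    set B : Finset V := (W.attach.filter P).image Subtype.val with hBdef
    refine ⟨A ∪ B, ?_, ?_⟩
    · intro e he
      revert he
      refine Sym2.ind (fun u u' => ?_) e
      intro he
      rw [SimpleGraph.mem_edgeSet] at he
      -- helper : membership conclusions
      have hAmem : ∀ u : V, u ∉ W → Sum.inl u ∈ S' → u ∈ A ∪ B := by
        intro v hv hvS
        exact Finset.mem_union_left _ (Finset.mem_filter.2 ⟨Finset.mem_toLeft.2 hvS, hv⟩)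
      have hBmem : ∀ w : ↥W, P w → (w : V) ∈ A ∪ B := by
        intro w hw
        exact Finset.mem_union_right _
          (Finset.mem_image.2 ⟨w, Finset.mem_filter.2 ⟨Finset.mem_attach _ _, hw⟩, rfl⟩)
      have hPb : ∀ (w : ↥W) (b : Bool),
          Sum.inr (w, (if b then 0 else 2 : Fin 3)) ∈ S' → P w := by
        intro w b h
        show Sum.inr (w, (0 : Fin 3)) ∈ S' ∨ Sum.inr (w, (2 : Fin 3)) ∈ S'
        cases b
        · exact Or.inr (by simpa using h)
        · exact Or.inl (by simpa using h)
      by_cases hu : u ∈ W <;> by_cases hu' : u' ∈ W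
      · -- both in W
        have hadj : (ReplaceGraph G W a).Adj
            (Sum.inr (⟨u, hu⟩, if a u u' then 0 else 2))
            (Sum.inr (⟨u', hu'⟩, if a u' u then 0 else 2)) := by
          refine replace_adj_of_rel G W a ?_ ?_
          · intro hc
            apply he.ne
            have := (Sum.inr.injEq _ _).mp hc
            exact congrArg (fun p => (p.1 : V)) this
          · exact Or.inr ⟨he.ne, he, rfl, rfl⟩
        obtain ⟨x, hxS, hxe⟩ := hcov _ ((ReplaceGraph G W a).mem_edgeSet.2 hadj)
        rcases Sym2.mem_iff.1 hxe with rfl | rfl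
        · exact ⟨u, hBmem ⟨u, hu⟩ (hPb ⟨u, hu⟩ (a u u') hxS), Sym2.mem_iff.2 (Or.inl rfl)⟩
        · exact ⟨u', hBmem ⟨u', hu'⟩ (hPb ⟨u', hu'⟩ (a u' u) hxS),
            Sym2.mem_iff.2 (Or.inr rfl)⟩
      · -- u ∈ W, u' ∉ W
        have hadj : (ReplaceGraph G W a).Adj (Sum.inl u')
            (Sum.inr (⟨u, hu⟩, if a u u' then 0 else 2)) := by
          refine replace_adj_of_rel G W a (by simp) ?_
          exact ⟨hu', he.symm, rfl⟩
        obtain ⟨x, hxS, hxe⟩ := hcov _ ((ReplaceGraph G W a).mem_edgeSet.2 hadj)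
        rcases Sym2.mem_iff.1 hxe with rfl | rfl
        · exact ⟨u', hAmem u' hu' hxS, Sym2.mem_iff.2 (Or.inr rfl)⟩
        · exact ⟨u, hBmem ⟨u, hu⟩ (hPb ⟨u, hu⟩ (a u u') hxS), Sym2.mem_iff.2 (Or.inl rfl)⟩
      · -- u ∉ W, u' ∈ W
        have hadj : (ReplaceGraph G W a).Adj (Sum.inl u)
            (Sum.inr (⟨u', hu'⟩, if a u' u then 0 else 2)) := by
          refine replace_adj_of_rel G W a (by simp) ?_
          exact ⟨hu, he, rfl⟩
        obtain ⟨x, hxS, hxe⟩ := hcov _ ((ReplaceGraph G W a).mem_edgeSet.2 hadj)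
        rcases Sym2.mem_iff.1 hxe with rfl | rfl
        · exact ⟨u, hAmem u hu hxS, Sym2.mem_iff.2 (Or.inl rfl)⟩
        · exact ⟨u', hBmem ⟨u', hu'⟩ (hPb ⟨u', hu'⟩ (a u' u) hxS),
            Sym2.mem_iff.2 (Or.inr rfl)⟩
      · -- neither in W
        have hadj : (ReplaceGraph G W a).Adj (Sum.inl u) (Sum.inl u') := by
          refine replace_adj_of_rel G W a (by simp [he.ne]) ?_
          exact ⟨he, hu, hu'⟩
        obtain ⟨x, hxS, hxe⟩ := hcov _ ((ReplaceGraph G W a).mem_edgeSet.2 hadj)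
        rcases Sym2.mem_iff.1 hxe with rfl | rfl
        · exact ⟨u, hAmem u hu hxS, Sym2.mem_iff.2 (Or.inl rfl)⟩
        · exact ⟨u', hAmem u' hu' hxS, Sym2.mem_iff.2 (Or.inr rfl)⟩
    · -- cardinality
      have hsplit : S'.toLeft.card + S'.toRight.card = S'.card :=
        Finset.card_toLeft_add_card_toRight
      have hfib : S'.toRight.card =
          ∑ w ∈ W.attach, (S'.toRight.filter (fun p => p.1 = w)).card :=
        Finset.card_eq_sum_card_fiberwise (fun p _ => Finset.mem_attach _ _)
      -- each designated vertex's triple contributes at least 1, and at least 2 if P w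
      have hkey : ∀ w ∈ W.attach,
          (if P w then 2 else 1) ≤ (S'.toRight.filter (fun p => p.1 = w)).card := by
        intro w _
        have hpath1 : (ReplaceGraph G W a).Adj (Sum.inr (w, (0 : Fin 3)))
            (Sum.inr (w, (1 : Fin 3))) := by
          refine replace_adj_of_rel G W a (by simp) ?_
          exact Or.inl ⟨rfl, Or.inl ⟨rfl, rfl⟩⟩
        have hpath2 : (ReplaceGraph G W a).Adj (Sum.inr (w, (1 : Fin 3)))
            (Sum.inr (w, (2 : Fin 3))) := by
          refine replace_adj_of_rel G W a (by simp) ?_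
          exact Or.inl ⟨rfl, Or.inr ⟨rfl, rfl⟩⟩
        obtain ⟨x₁, hx₁S, hx₁e⟩ := hcov _ ((ReplaceGraph G W a).mem_edgeSet.2 hpath1)
        obtain ⟨x₂, hx₂S, hx₂e⟩ := hcov _ ((ReplaceGraph G W a).mem_edgeSet.2 hpath2)
        rw [Sym2.mem_iff] at hx₁e hx₂e
        by_cases hPw : P w
        · rw [if_pos hPw]
          rcases hPw with h0 | h2
          · -- (w,0) ∈ S'; find another element via edge (w,1)-(w,2)
            have hmem0 : ((w, (0 : Fin 3)) : ↥W × Fin 3) ∈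
                S'.toRight.filter (fun p => p.1 = w) :=
              Finset.mem_filter.2 ⟨Finset.mem_toRight.2 h0, rfl⟩
            rcases hx₂e with rfl | rfl
            · refine Finset.one_lt_card.2 (⟨_, hmem0, _, Finset.mem_filter.2 ⟨Finset.mem_toRight.2 hx₂S, rfl⟩, ?_⟩)
              simp
            · refine Finset.one_lt_card.2 (⟨_, hmem0, _, Finset.mem_filter.2 ⟨Finset.mem_toRight.2 hx₂S, rfl⟩, ?_⟩)
              simp
          · have hmem2 : ((w, (2 : Fin 3)) : ↥W × Fin 3) ∈
                S'.toRight.filter (fun p => p.1 = w) :=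
              Finset.mem_filter.2 ⟨Finset.mem_toRight.2 h2, rfl⟩
            rcases hx₁e with rfl | rfl
            · refine Finset.one_lt_card.2 (⟨_, hmem2, _, Finset.mem_filter.2 ⟨Finset.mem_toRight.2 hx₁S, rfl⟩, ?_⟩)
              simp
            · refine Finset.one_lt_card.2 (⟨_, hmem2, _, Finset.mem_filter.2 ⟨Finset.mem_toRight.2 hx₁S, rfl⟩, ?_⟩)
              simp
        · rw [if_neg hPw]
          rcases hx₁e with rfl | rfl
          · exact Finset.card_pos.2
              ⟨_, Finset.mem_filter.2 ⟨Finset.mem_toRight.2 hx₁S, rfl⟩⟩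
          · exact Finset.card_pos.2
              ⟨_, Finset.mem_filter.2 ⟨Finset.mem_toRight.2 hx₁S, rfl⟩⟩
      have hsum : ∑ w ∈ W.attach, (if P w then 2 else 1) ≤ S'.toRight.card := by
        rw [hfib]; exact Finset.sum_le_sum hkey
      have hsum2 : ∑ w ∈ W.attach, (if P w then 2 else 1) =
          W.card + (W.attach.filter P).card := by
        have : ∀ w : ↥W, (if P w then 2 else 1) = 1 + (if P w then 1 else 0) := by
          intro w; by_cases h : P w <;> simp [h]
        rw [Finset.sum_congr rfl (fun w _ => this w), Finset.sum_add_distrib,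
          Finset.sum_const, Finset.sum_boole, Finset.card_attach]
        simp
      have hAle : A.card ≤ S'.toLeft.card := Finset.card_filter_le _ _
      have hBle : B.card ≤ (W.attach.filter P).card := Finset.card_image_le
      have := Finset.card_union_le A B
      omega
  · rintro ⟨S, hcov, hcard⟩
    set S' : Finset (V ⊕ (↥W × Fin 3)) :=
      ((S.filter (fun u => u ∉ W)).image Sum.inl)
        ∪ ((W.attach.filter (fun (w : ↥W) => (w : V) ∈ S)).image
            (fun w => Sum.inr (w, (0 : Fin 3))))
        ∪ ((W.attach.filter (fun (w : ↥W) => (w : V) ∈ S)).image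
            (fun w => Sum.inr (w, (2 : Fin 3))))
        ∪ ((W.attach.filter (fun (w : ↥W) => (w : V) ∉ S)).image
            (fun w => Sum.inr (w, (1 : Fin 3)))) with hS'def
    have hinl : ∀ u : V, u ∈ S → u ∉ W → Sum.inl u ∈ S' := by
      intro u hS hW
      refine Finset.mem_union_left _ (Finset.mem_union_left _ (Finset.mem_union_left _ ?_))
      exact Finset.mem_image.2 ⟨u, Finset.mem_filter.2 ⟨hS, hW⟩, rfl⟩
    have h0 : ∀ w : ↥W, (w : V) ∈ S → Sum.inr (w, (0 : Fin 3)) ∈ S' := by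
      intro w hw
      refine Finset.mem_union_left _ (Finset.mem_union_left _ (Finset.mem_union_right _ ?_))
      exact Finset.mem_image.2 ⟨w, Finset.mem_filter.2 ⟨Finset.mem_attach _ _, hw⟩, rfl⟩
    have h2 : ∀ w : ↥W, (w : V) ∈ S → Sum.inr (w, (2 : Fin 3)) ∈ S' := by
      intro w hw
      refine Finset.mem_union_left _ (Finset.mem_union_right _ ?_)
      exact Finset.mem_image.2 ⟨w, Finset.mem_filter.2 ⟨Finset.mem_attach _ _, hw⟩, rfl⟩
    have h1 : ∀ w : ↥W, (w : V) ∉ S → Sum.inr (w, (1 : Fin 3)) ∈ S' := by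
      intro w hw
      refine Finset.mem_union_right _ ?_
      exact Finset.mem_image.2 ⟨w, Finset.mem_filter.2 ⟨Finset.mem_attach _ _, hw⟩, rfl⟩
    refine ⟨S', ?_, ?_⟩
    · have key : ∀ x y, ReplaceRel G W a x y → ∃ v ∈ S', v = x ∨ v = y := by
        intro x y h
        rcases x with u | ⟨w, i⟩ <;> rcases y with u' | ⟨w', j⟩
        · obtain ⟨hadj, hu, hu'⟩ := h
          obtain ⟨v, hvS, hve⟩ := hcov _ (G.mem_edgeSet.2 hadj)
          rcases Sym2.mem_iff.1 hve with rfl | rfl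
          · exact ⟨Sum.inl v, hinl v hvS hu, Or.inl rfl⟩
          · exact ⟨Sum.inl v, hinl v hvS hu', Or.inr rfl⟩
        · obtain ⟨hu, hadj, hj⟩ := h
          obtain ⟨v, hvS, hve⟩ := hcov _ (G.mem_edgeSet.2 hadj)
          rcases Sym2.mem_iff.1 hve with rfl | rfl
          · exact ⟨Sum.inl v, hinl v hvS hu, Or.inl rfl⟩
          · refine ⟨Sum.inr (w', j), ?_, Or.inr rfl⟩
            rw [hj]
            split_ifs
            · exact h0 w' hvS
            · exact h2 w' hvS
        · exact absurd h id
        · rcases h with ⟨hww, hij⟩ | ⟨hne, hadj, hi, hj⟩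
          · have : w = w' := Subtype.ext hww
            subst this
            by_cases hs : (w : V) ∈ S
            · rcases hij with ⟨rfl, rfl⟩ | ⟨rfl, rfl⟩
              · exact ⟨_, h0 w hs, Or.inl rfl⟩
              · exact ⟨_, h2 w hs, Or.inr rfl⟩
            · rcases hij with ⟨rfl, rfl⟩ | ⟨rfl, rfl⟩
              · exact ⟨_, h1 w hs, Or.inr rfl⟩
              · exact ⟨_, h1 w hs, Or.inl rfl⟩
          · obtain ⟨v, hvS, hve⟩ := hcov _ (G.mem_edgeSet.2 hadj)
            rcases Sym2.mem_iff.1 hve with rfl | rfl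
            · refine ⟨Sum.inr (w, i), ?_, Or.inl rfl⟩
              rw [hi]
              split_ifs
              · exact h0 w hvS
              · exact h2 w hvS
            · refine ⟨Sum.inr (w', j), ?_, Or.inr rfl⟩
              rw [hj]
              split_ifs
              · exact h0 w' hvS
              · exact h2 w' hvS
      intro e he
      revert he
      refine Sym2.ind (fun x y => ?_) e
      intro he
      rw [SimpleGraph.mem_edgeSet, ReplaceGraph, SimpleGraph.fromRel_adj] at he
      obtain ⟨hne, h | h⟩ := he
      · obtain ⟨v, hvS, hv⟩ := key x y h
        exact ⟨v, hvS, Sym2.mem_iff.2 hv⟩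
      · obtain ⟨v, hvS, hv⟩ := key y x h
        exact ⟨v, hvS, Sym2.mem_iff.2 hv.symm⟩
    · have e1 : (S.filter (fun u => u ∉ W)).card + (S.filter (fun u => ¬u ∉ W)).card
          = S.card := Finset.card_filter_add_card_filter_not _
      have e2 : (W.attach.filter (fun (w : ↥W) => (w : V) ∈ S)).card
          + (W.attach.filter (fun (w : ↥W) => ¬(w : V) ∈ S)).card = W.card := by
        rw [Finset.card_filter_add_card_filter_not, Finset.card_attach]
      have e3 : (W.attach.filter (fun (w : ↥W) => (w : V) ∈ S)).card
          ≤ (S.filter (fun u => ¬u ∉ W)).card := by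
        refine Finset.card_le_card_of_injOn Subtype.val ?_ ?_
        · intro w hw
          rw [Finset.mem_coe, Finset.mem_filter] at hw ⊢
          exact ⟨hw.2, not_not.2 w.2⟩
        · exact fun x _ y _ h => Subtype.ext h
      have c1 := Finset.card_union_le
        (((S.filter (fun u => u ∉ W)).image Sum.inl)
          ∪ ((W.attach.filter (fun (w : ↥W) => (w : V) ∈ S)).image
              (fun w => Sum.inr (w, (0 : Fin 3))))
          ∪ ((W.attach.filter (fun (w : ↥W) => (w : V) ∈ S)).image
              (fun w => Sum.inr (w, (2 : Fin 3)))))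
        ((W.attach.filter (fun (w : ↥W) => (w : V) ∉ S)).image
            (fun w => Sum.inr (w, (1 : Fin 3))))
      have c2 := Finset.card_union_le
        (((S.filter (fun u => u ∉ W)).image Sum.inl)
          ∪ ((W.attach.filter (fun (w : ↥W) => (w : V) ∈ S)).image
              (fun w => Sum.inr (w, (0 : Fin 3)))))
        ((W.attach.filter (fun (w : ↥W) => (w : V) ∈ S)).image
            (fun w => Sum.inr (w, (2 : Fin 3))))
      have c3 := Finset.card_union_le
        ((S.filter (fun u => u ∉ W)).image Sum.inl)
        ((W.attach.filter (fun (w : ↥W) => (w : V) ∈ S)).image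
            (fun w => Sum.inr (w, (0 : Fin 3))))
      have i1 : ((S.filter (fun u => u ∉ W)).image
          (Sum.inl : V → V ⊕ (↥W × Fin 3))).card
          ≤ (S.filter (fun u => u ∉ W)).card := Finset.card_image_le
      have i2 : ((W.attach.filter (fun (w : ↥W) => (w : V) ∈ S)).image
          (fun w => Sum.inr (w, (0 : Fin 3)) : ↥W → V ⊕ (↥W × Fin 3))).card
          ≤ (W.attach.filter (fun (w : ↥W) => (w : V) ∈ S)).card := Finset.card_image_le
      have i3 : ((W.attach.filter (fun (w : ↥W) => (w : V) ∈ S)).image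
          (fun w => Sum.inr (w, (2 : Fin 3)) : ↥W → V ⊕ (↥W × Fin 3))).card
          ≤ (W.attach.filter (fun (w : ↥W) => (w : V) ∈ S)).card := Finset.card_image_le
      have i4 : ((W.attach.filter (fun (w : ↥W) => (w : V) ∉ S)).image
          (fun w => Sum.inr (w, (1 : Fin 3)) : ↥W → V ⊕ (↥W × Fin 3))).card
          ≤ (W.attach.filter (fun (w : ↥W) => (w : V) ∉ S)).card := Finset.card_image_le
      rw [hS'def]
      omega
end

section
/- In any triangulation of a convex polygon with n ≥ 4 vertices and any vertex v, if the degree of v (number of diagonals plus polygon edges at v) is less than n − 1, then there exists a flip that increases the degree of v by one. -/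
/-- Two chords of a convex polygon cross iff their endpoints interleave. -/
def Crosses {m : ℕ} (e f : Sym2 (Fin m)) : Prop :=
  ∃ a b c d : Fin m, a < b ∧ b < c ∧ c < d ∧
    ((e = s(a, c) ∧ f = s(b, d)) ∨ (e = s(b, d) ∧ f = s(a, c)))

/-- A triangulation of a convex polygon with `m` vertices: a set of `m - 3`
pairwise non-crossing diagonals. -/
def IsPolygonTriangulation (m : ℕ) (T : Finset (Sym2 (Fin m))) : Prop :=
  (∀ e ∈ T, ∃ a b : Fin m, e = s(a, b) ∧ (a : ℕ) + 2 ≤ (b : ℕ) ∧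
      ¬((a : ℕ) = 0 ∧ (b : ℕ) = m - 1)) ∧
  (∀ e ∈ T, ∀ f ∈ T, ¬ Crosses e f) ∧
  T.card = m - 3

def LinX (a b c d : ℕ) : Prop :=
  (min a b < c ∧ c < max a b ∧ (d < min a b ∨ max a b < d)) ∨
  (min a b < d ∧ d < max a b ∧ (c < min a b ∨ max a b < c))

lemma crosses_mk {m : ℕ} (x y z w : Fin m) (h1 : (x:ℕ) < z) (h2 : (z:ℕ) < y)
    (h3 : (w:ℕ) < x ∨ (y:ℕ) < w) : Crosses s(x,y) s(z,w) := by
  rcases h3 with h3 | h3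
  · exact ⟨w, x, z, y, by rw [Fin.lt_def]; omega, by rw [Fin.lt_def]; omega,
      by rw [Fin.lt_def]; omega, Or.inr ⟨rfl, Sym2.eq_swap⟩⟩
  · exact ⟨x, z, y, w, by rw [Fin.lt_def]; omega, by rw [Fin.lt_def]; omega,
      by rw [Fin.lt_def]; omega, Or.inl ⟨rfl, rfl⟩⟩

lemma crossChar {m : ℕ} (x y z w : Fin m) :
    Crosses s(x,y) s(z,w) ↔ LinX x.1 y.1 z.1 w.1 := by
  constructor
  · rintro ⟨a, b, c, d, hab, hbc, hcd, (⟨h1, h2⟩ | ⟨h1, h2⟩)⟩ <;>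
    · rw [Sym2.eq_iff] at h1 h2
      simp only [Fin.lt_def] at hab hbc hcd
      unfold LinX
      rcases h1 with ⟨rfl, rfl⟩ | ⟨rfl, rfl⟩ <;> rcases h2 with ⟨rfl, rfl⟩ | ⟨rfl, rfl⟩ <;> omega
  · intro h
    rcases h with ⟨h1, h2, h3⟩ | ⟨h1, h2, h3⟩
    · rcases le_total (x:ℕ) (y:ℕ) with hxy | hxy
      · exact crosses_mk x y z w (by omega) (by omega) (by omega)
      · rw [show s(x,y) = s(y,x) from Sym2.eq_swap]
        exact crosses_mk y x z w (by omega) (by omega) (by omega)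
    · rw [show s(z,w) = s(w,z) from Sym2.eq_swap]
      rcases le_total (x:ℕ) (y:ℕ) with hxy | hxy
      · exact crosses_mk x y w z (by omega) (by omega) (by omega)
      · rw [show s(x,y) = s(y,x) from Sym2.eq_swap]
        exact crosses_mk y x w z (by omega) (by omega) (by omega)

def shv (n v t : ℕ) : ℕ := if v ≤ t then t - v else t + n - v

lemma linx_shift (n v a b c d : ℕ) (hv : v < n) (ha : a < n) (hb : b < n) (hc : c < n)
    (hd : d < n) : LinX a b c d ↔ LinX (shv n v a) (shv n v b) (shv n v c) (shv n v d) := by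
  unfold LinX shv
  split_ifs <;> omega

lemma linx_mm (a b c d : ℕ) :
    LinX a b c d ↔ LinX (min a b) (max a b) (min c d) (max c d) := by
  unfold LinX; omega

lemma linx_comm (a b c d : ℕ) : LinX a b c d ↔ LinX c d a b := by
  unfold LinX; omega

def pv {n : ℕ} (v x : Fin n) : ℕ := shv n v.1 x.1

lemma pv_lt {n : ℕ} (v x : Fin n) : pv v x < n := by
  have := x.2; have := v.2; unfold pv shv; split <;> omega

@[simp] lemma pv_self {n : ℕ} (v : Fin n) : pv v v = 0 := by
  unfold pv shv; simp

lemma pv_inj {n : ℕ} (v x y : Fin n) (h : pv v x = pv v y) : x = y := by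
  have := x.2; have := y.2; have := v.2
  unfold pv shv at h; apply Fin.ext; split at h <;> split at h <;> omega

lemma pv_eq_zero {n : ℕ} (v x : Fin n) (h : pv v x = 0) : x = v := by
  apply pv_inj v; simp [h]

def qlo {n : ℕ} (v : Fin n) (e : Sym2 (Fin n)) : ℕ :=
  Sym2.lift ⟨fun a b => min (pv v a) (pv v b), fun a b => min_comm _ _⟩ e

def qhi {n : ℕ} (v : Fin n) (e : Sym2 (Fin n)) : ℕ :=
  Sym2.lift ⟨fun a b => max (pv v a) (pv v b), fun a b => max_comm _ _⟩ e

@[simp] lemma qlo_mk {n : ℕ} (v a b : Fin n) : qlo v s(a,b) = min (pv v a) (pv v b) := rfl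
@[simp] lemma qhi_mk {n : ℕ} (v a b : Fin n) : qhi v s(a,b) = max (pv v a) (pv v b) := rfl

lemma qhi_lt {n : ℕ} (v : Fin n) (e : Sym2 (Fin n)) : qhi v e < n := by
  induction e using Sym2.ind with
  | _ x y => simp only [qhi_mk]; exact max_lt (pv_lt v x) (pv_lt v y)

lemma qlo_le_qhi {n : ℕ} (v : Fin n) (e : Sym2 (Fin n)) : qlo v e ≤ qhi v e := by
  induction e using Sym2.ind with
  | _ x y => simp only [qlo_mk, qhi_mk]; omega

lemma cross_iff {n : ℕ} (v : Fin n) (e f : Sym2 (Fin n)) :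
    Crosses e f ↔ LinX (qlo v e) (qhi v e) (qlo v f) (qhi v f) := by
  induction e, f using Sym2.inductionOn₂ with
  | _ a b c d =>
    rw [crossChar, linx_shift n v.1 a.1 b.1 c.1 d.1 v.2 a.2 b.2 c.2 d.2, linx_mm]
    rfl

lemma sorted_rep {n : ℕ} (v : Fin n) (e : Sym2 (Fin n)) :
    ∃ x y : Fin n, e = s(x,y) ∧ pv v x ≤ pv v y := by
  induction e using Sym2.ind with
  | _ x y =>
    rcases le_total (pv v x) (pv v y) with h | h
    · exact ⟨x, y, rfl, h⟩
    · exact ⟨y, x, Sym2.eq_swap, h⟩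

lemma crosses_comm {n : ℕ} {e f : Sym2 (Fin n)} (h : Crosses e f) : Crosses f e := by
  obtain ⟨a,b,c,d,h1,h2,h3,h4⟩ := h
  exact ⟨a,b,c,d,h1,h2,h3, h4.symm.imp (fun ⟨u,w⟩ => ⟨w,u⟩) (fun ⟨u,w⟩ => ⟨w,u⟩)⟩

lemma not_crosses_self {n : ℕ} (e : Sym2 (Fin n)) : ¬ Crosses e e := by
  intro h
  obtain ⟨v⟩ : Nonempty (Fin n) := by
    obtain ⟨a,_,_,_,_,_⟩ := h; exact ⟨a⟩
  rw [cross_iff v] at h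
  unfold LinX at h; omega


def loHi {m : ℕ} (e : Sym2 (Fin m)) : ℕ × ℕ :=
  Sym2.lift ⟨fun a b => (min a.1 b.1, max a.1 b.1), fun a b => by
    simp [min_comm, max_comm]⟩ e

@[simp] lemma loHi_mk {m : ℕ} (a b : Fin m) : loHi s(a,b) = (min a.1 b.1, max a.1 b.1) := rfl

lemma loHi_inj {m : ℕ} (e f : Sym2 (Fin m)) (h : loHi e = loHi f) : e = f := by
  induction e, f using Sym2.inductionOn₂ with
  | _ a b c d =>
    simp only [loHi_mk, Prod.mk.injEq] at h
    rw [Sym2.eq_iff]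
    rcases le_total a.1 b.1 with h1 | h1 <;> rcases le_total c.1 d.1 with h2 | h2 <;>
      [left; right; right; left] <;> constructor <;> apply Fin.ext <;> omega

lemma cross_iff_loHi {m : ℕ} (e f : Sym2 (Fin m)) :
    Crosses e f ↔ LinX (loHi e).1 (loHi e).2 (loHi f).1 (loHi f).2 := by
  induction e, f using Sym2.inductionOn₂ with
  | _ a b c d => rw [crossChar, linx_mm]; rfl

lemma noncross_bound (V : Finset ℕ) : ∀ (S : Finset (ℕ × ℕ)),
    (∀ p ∈ S, p.1 ∈ V ∧ p.2 ∈ V ∧ p.1 < p.2 ∧ (∃ c ∈ V, p.1 < c ∧ c < p.2) ∧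
      (∃ c ∈ V, c < p.1 ∨ p.2 < c)) →
    (∀ p ∈ S, ∀ q ∈ S, ¬ LinX p.1 p.2 q.1 q.2) →
    S.card ≤ V.card - 3 := by
  induction V using Finset.strongInduction with
  | _ V ih =>
    intro S h1 h2
    rcases S.eq_empty_or_nonempty with rfl | hS
    · simp
    obtain ⟨p, hp, hmin⟩ := S.exists_min_image (fun p => p.2 - p.1) hS
    obtain ⟨ha, hb, hab, ⟨cin, hcin, hcin1, hcin2⟩, ⟨cout, hcout, hcoutlt⟩⟩ := h1 p hp
    set a := p.1 with hadef
    set b := p.2 with hbdef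
    set V' : Finset ℕ := V.filter (fun c => c ≤ a ∨ b ≤ c) with hV'
    have hss : V' ⊂ V := by
      rw [hV', Finset.filter_ssubset]
      exact ⟨cin, hcin, by omega⟩
    -- endpoints of other pairs avoid the open interval (a,b)
    have havoid : ∀ q ∈ S, q ≠ p → (q.1 ≤ a ∨ b ≤ q.1) ∧ (q.2 ≤ a ∨ b ≤ q.2) := by
      intro q hq hqp
      obtain ⟨_, _, hq12, _, _⟩ := h1 q hq
      have hnc := h2 p hp q hq
      have hspan := hmin q hq
      have hqp' : q.1 ≠ a ∨ q.2 ≠ b := by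
        by_contra hc; push_neg at hc
        exact hqp (Prod.ext hc.1 hc.2)
      unfold LinX at hnc
      constructor
      · by_contra hcon; push_neg at hcon
        have hq2 : a ≤ q.2 ∧ q.2 ≤ b := by omega
        omega
      · by_contra hcon; push_neg at hcon
        have hq1 : a ≤ q.1 ∧ q.1 ≤ b := by omega
        omega
    set S' := S.erase p with hS'
    have hcard : S'.card = S.card - 1 := Finset.card_erase_of_mem hp
    have hb1 : ∀ q ∈ S', q.1 ∈ V' ∧ q.2 ∈ V' ∧ q.1 < q.2 ∧
        (∃ c ∈ V', q.1 < c ∧ c < q.2) ∧ (∃ c ∈ V', c < q.1 ∨ q.2 < c) := by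
      intro q hq
      have hqS := Finset.mem_of_mem_erase hq
      have hqp := Finset.ne_of_mem_erase hq
      obtain ⟨hv1, hv2, h12, ⟨c, hc, hc1, hc2⟩, ⟨c', hc', hc'lt⟩⟩ := h1 q hqS
      obtain ⟨he1, he2⟩ := havoid q hqS hqp
      have haV' : a ∈ V' := by rw [hV', Finset.mem_filter]; exact ⟨ha, by omega⟩
      have hbV' : b ∈ V' := by rw [hV', Finset.mem_filter]; exact ⟨hb, by omega⟩
      refine ⟨?_, ?_, h12, ?_, ?_⟩
      · rw [hV', Finset.mem_filter]; exact ⟨hv1, he1⟩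
      · rw [hV', Finset.mem_filter]; exact ⟨hv2, he2⟩
      · by_cases hcint : c ≤ a ∨ b ≤ c
        · exact ⟨c, by rw [hV', Finset.mem_filter]; exact ⟨hc, hcint⟩, hc1, hc2⟩
        · push_neg at hcint
          -- a < c < b, so q.1 ≤ a and b ≤ q.2
          have hq1a : q.1 ≤ a := by omega
          have hq2b : b ≤ q.2 := by omega
          rcases eq_or_lt_of_le hq1a with heq | hlt
          · -- q.1 = a, then q.2 > b since q ≠ p
            have hq2ne : q.2 ≠ b := fun hh => hqp (Prod.ext (by omega) (by omega))
            exact ⟨b, hbV', by omega, by omega⟩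
          · exact ⟨a, haV', by omega, by omega⟩
      · by_cases hcint : c' ≤ a ∨ b ≤ c'
        · exact ⟨c', by rw [hV', Finset.mem_filter]; exact ⟨hc', hcint⟩, hc'lt⟩
        · push_neg at hcint
          rcases hc'lt with hlt | hlt
          · exact ⟨a, haV', by omega⟩
          · exact ⟨b, hbV', by omega⟩
    have hb2 : ∀ q ∈ S', ∀ r ∈ S', ¬ LinX q.1 q.2 r.1 r.2 := fun q hq r hr =>
      h2 q (Finset.mem_of_mem_erase hq) r (Finset.mem_of_mem_erase hr)
    have hrec := ih V' hss S' hb1 hb2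
    have hVcard : V'.card < V.card := Finset.card_lt_card hss
    have h3V : 3 ≤ V'.card := by
      have hsub : ({a, b, cout} : Finset ℕ) ⊆ V' := by
        intro t ht
        simp only [Finset.mem_insert, Finset.mem_singleton] at ht
        rw [hV', Finset.mem_filter]
        rcases ht with rfl | rfl | rfl
        · exact ⟨ha, by omega⟩
        · exact ⟨hb, by omega⟩
        · exact ⟨hcout, by omega⟩
      have : ({a, b, cout} : Finset ℕ).card = 3 := by
        rw [Finset.card_insert_of_notMem, Finset.card_insert_of_notMem,
          Finset.card_singleton] <;> simp <;> omega
      calc 3 = ({a, b, cout} : Finset ℕ).card := this.symm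
        _ ≤ V'.card := Finset.card_le_card hsub
    have hScard : 1 ≤ S.card := Finset.card_pos.mpr hS
    omega

/-- A diagonal of the polygon that crosses no diagonal of a triangulation is in it. -/
lemma mem_of_not_crossed (n : ℕ) (hn : 4 ≤ n) (T : Finset (Sym2 (Fin n)))
    (hT : IsPolygonTriangulation n T) (d : Sym2 (Fin n))
    (hd : ∃ a b : Fin n, d = s(a, b) ∧ (a : ℕ) + 2 ≤ (b : ℕ) ∧
      ¬((a : ℕ) = 0 ∧ (b : ℕ) = n - 1))
    (hfree : ∀ h ∈ T, ¬ Crosses d h) : d ∈ T := by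
  classical
  obtain ⟨hT1, hT2, hT3⟩ := hT
  by_contra hdT
  set S : Finset (Sym2 (Fin n)) := insert d T with hSdef
  have hScard : S.card = n - 2 := by
    rw [hSdef, Finset.card_insert_of_notMem hdT, hT3]; omega
  have hfmt : ∀ e ∈ S, ∃ a b : Fin n, e = s(a, b) ∧ (a : ℕ) + 2 ≤ (b : ℕ) ∧
      ¬((a : ℕ) = 0 ∧ (b : ℕ) = n - 1) := by
    intro e he
    rcases Finset.mem_insert.mp he with rfl | he
    · exact hd
    · exact hT1 e he
  have hnc : ∀ e ∈ S, ∀ f ∈ S, ¬ Crosses e f := by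
    intro e he f hf
    rw [hSdef] at he hf
    rcases Finset.mem_insert.mp he with he | he <;> rcases Finset.mem_insert.mp hf with hf | hf
    · rw [he, hf]; exact not_crosses_self d
    · rw [he]; exact hfree f hf
    · rw [hf]; exact fun h => hfree e he (crosses_comm h)
    · exact hT2 e he f hf
  set S' : Finset (ℕ × ℕ) := S.image loHi with hS'def
  have hS'card : S'.card = n - 2 := by
    rw [hS'def, Finset.card_image_of_injective _ (fun e f => loHi_inj e f), hScard]
  have hbound := noncross_bound (Finset.range n) S' ?_ ?_
  · rw [hS'card, Finset.card_range] at hbound; omega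
  · intro p hp
    obtain ⟨e, he, rfl⟩ := Finset.mem_image.mp hp
    obtain ⟨a, b, rfl, hab2, habne⟩ := hfmt e he
    have ha := a.2; have hb := b.2
    have hlo : (loHi s(a,b)).1 = a.1 := by simp only [loHi_mk]; omega
    have hhi : (loHi s(a,b)).2 = b.1 := by simp only [loHi_mk]; omega
    rw [hlo, hhi]
    refine ⟨Finset.mem_range.mpr ha, Finset.mem_range.mpr hb, by omega,
      ⟨a.1 + 1, Finset.mem_range.mpr (by omega), by omega, by omega⟩, ?_⟩
    by_cases ha0 : a.1 = 0
    · exact ⟨n - 1, Finset.mem_range.mpr (by omega), by omega⟩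
    · exact ⟨0, Finset.mem_range.mpr (by omega), by omega⟩
  · intro p hp q hq
    obtain ⟨e, he, rfl⟩ := Finset.mem_image.mp hp
    obtain ⟨f, hf, rfl⟩ := Finset.mem_image.mp hq
    rw [← cross_iff_loHi]
    exact hnc e he f hf

lemma format_of_pv {n : ℕ} (v z : Fin n) (h2 : 2 ≤ pv v z) (hn2 : pv v z ≤ n - 2) :
    ∃ a b : Fin n, s(v, z) = s(a, b) ∧ (a : ℕ) + 2 ≤ (b : ℕ) ∧
      ¬((a : ℕ) = 0 ∧ (b : ℕ) = n - 1) := by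
  have hvn := v.2; have hzn := z.2
  unfold pv shv at h2 hn2
  rcases le_or_gt v.1 z.1 with h | h
  · rw [if_pos h] at h2 hn2
    exact ⟨v, z, rfl, by omega, by omega⟩
  · rw [if_neg (by omega)] at h2 hn2
    exact ⟨z, v, Sym2.eq_swap, by omega, by omega⟩

lemma cross_pv {n : ℕ} (v a b c d : Fin n) (h1 : pv v a ≤ pv v b) (h2 : pv v c ≤ pv v d) :
    Crosses s(a,b) s(c,d) ↔ LinX (pv v a) (pv v b) (pv v c) (pv v d) := by
  rw [cross_iff v]
  simp only [qlo_mk, qhi_mk, min_eq_left h1, max_eq_right h1, min_eq_left h2, max_eq_right h2]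

/-- In a triangulation of a convex polygon with `n ≥ 4` vertices, if the degree
of a vertex `v` (its two polygon edges plus its diagonals) is less than
`n - 1`, then some flip increases the degree of `v` by one. -/
theorem stmt16 (n : ℕ) (hn : 4 ≤ n) (T : Finset (Sym2 (Fin n)))
    (hT : IsPolygonTriangulation n T) (v : Fin n)
    (hdeg : 2 + (T.filter (fun e => v ∈ e)).card < n - 1) :
    ∃ e f : Sym2 (Fin n), e ∈ T ∧ f ∉ T ∧ v ∉ e ∧ v ∈ f ∧
      IsPolygonTriangulation n (insert f (T.erase e)) ∧
      ((insert f (T.erase e)).filter (fun e => v ∈ e)).card =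
        (T.filter (fun e => v ∈ e)).card + 1 := by
  classical
  obtain ⟨hT1, hT2, hT3⟩ := hT
  -- Main claim: there is a chord from v crossing exactly one diagonal of T.
  have KEY : ∃ (z : Fin n) (e : Sym2 (Fin n)), e ∈ T ∧ Crosses s(v,z) e ∧
      ∀ g ∈ T, Crosses s(v,z) g → g = e := by
    -- Step A: some chord from v crosses something
    have hW : ∃ w : Fin n, ∃ h ∈ T, Crosses s(v,w) h := by
      by_contra hcon
      push_neg at hcon
      set D : Finset (Fin n) :=
        Finset.univ.filter (fun z : Fin n => 2 ≤ pv v z ∧ pv v z ≤ n - 2) with hDdef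
      have hmap : ∀ z ∈ D, s(v,z) ∈ T.filter (fun e => v ∈ e) := by
        intro z hz
        rw [hDdef, Finset.mem_filter] at hz
        rw [Finset.mem_filter]
        refine ⟨mem_of_not_crossed n hn T ⟨hT1, hT2, hT3⟩ _
          (format_of_pv v z hz.2.1 hz.2.2) (fun h hh => hcon z h hh), ?_⟩
        rw [Sym2.mem_iff]; left; rfl
      have hinj : Set.InjOn (fun z : Fin n => s(v,z)) D := by
        intro z1 h1 z2 h2 he
        simp only [Sym2.eq_iff] at he
        rw [hDdef, Finset.mem_coe, Finset.mem_filter] at h1 h2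
        rcases he with ⟨_, h⟩ | ⟨hv2, hv1⟩
        · exact h
        · exfalso
          have : pv v z1 = 0 := by rw [hv1]; exact pv_self v
          omega
      have hDcard : D.card ≤ (T.filter (fun e => v ∈ e)).card :=
        Finset.card_le_card_of_injOn _ hmap hinj
      set E : Finset (Fin n) :=
        Finset.univ.filter (fun z : Fin n => z ≠ v ∧ (pv v z = 1 ∨ pv v z = n - 1)) with hEdef
      have hEcard : E.card ≤ 2 := by
        have himg : E.image (pv v) ⊆ {1, n-1} := by
          intro t ht
          obtain ⟨z, hz, rfl⟩ := Finset.mem_image.mp ht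
          rw [hEdef, Finset.mem_filter] at hz
          simp only [Finset.mem_insert, Finset.mem_singleton]
          tauto
        have h1 : (E.image (pv v)).card = E.card := by
          apply Finset.card_image_of_injOn
          intro z1 h1 z2 h2 h
          exact pv_inj v z1 z2 h
        calc E.card = (E.image (pv v)).card := h1.symm
          _ ≤ ({1, n-1} : Finset ℕ).card := Finset.card_le_card himg
          _ ≤ 2 := Finset.card_insert_le _ _ |>.trans (by simp)
      have hsub : Finset.univ.erase v ⊆ D ∪ E := by
        intro z hz
        have hzv : z ≠ v := Finset.ne_of_mem_erase hz
        have hz1 : 1 ≤ pv v z := by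
          rcases Nat.eq_zero_or_pos (pv v z) with h | h
          · exact absurd (pv_eq_zero v z h) hzv
          · exact h
        have hz2 : pv v z ≤ n - 1 := by have := pv_lt v z; omega
        rw [Finset.mem_union, hDdef, hEdef, Finset.mem_filter, Finset.mem_filter]
        by_cases hc : pv v z = 1 ∨ pv v z = n - 1
        · right; exact ⟨Finset.mem_univ z, hzv, hc⟩
        · left; push_neg at hc; exact ⟨Finset.mem_univ z, by omega, by omega⟩
      have hcount : n - 1 ≤ D.card + E.card := by
        have h1 : (Finset.univ.erase v).card = n - 1 := by
          rw [Finset.card_erase_of_mem (Finset.mem_univ v), Finset.card_univ, Fintype.card_fin]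
        calc n - 1 = (Finset.univ.erase v).card := h1.symm
          _ ≤ (D ∪ E).card := Finset.card_le_card hsub
          _ ≤ D.card + E.card := Finset.card_union_le D E
      omega
    obtain ⟨w, h0, hh0T, hh0c⟩ := hW
    -- Step B: minimal crossed diagonal e* = s(A,B)
    set C : Finset (Sym2 (Fin n)) := T.filter (fun h => Crosses s(v,w) h) with hCdef
    have hCne : C.Nonempty := ⟨h0, by rw [hCdef, Finset.mem_filter]; exact ⟨hh0T, hh0c⟩⟩
    obtain ⟨e1, he1C, hmin1⟩ := C.exists_min_image (qlo v) hCne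
    have hC2ne : (C.filter (fun g => qlo v g = qlo v e1)).Nonempty :=
      ⟨e1, Finset.mem_filter.mpr ⟨he1C, rfl⟩⟩
    obtain ⟨es, hesC2, hmax2⟩ :=
      (C.filter (fun g => qlo v g = qlo v e1)).exists_max_image (qhi v) hC2ne
    have hesC : es ∈ C := (Finset.mem_filter.mp hesC2).1
    have hesqlo : qlo v es = qlo v e1 := (Finset.mem_filter.mp hesC2).2
    have hesT : es ∈ T := by rw [hCdef, Finset.mem_filter] at hesC; exact hesC.1
    have hescr : Crosses s(v,w) es := by rw [hCdef, Finset.mem_filter] at hesC; exact hesC.2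
    have hminlo : ∀ g ∈ T, Crosses s(v,w) g → qlo v es ≤ qlo v g := by
      intro g hg hc
      rw [hesqlo]
      exact hmin1 g (by rw [hCdef, Finset.mem_filter]; exact ⟨hg, hc⟩)
    have hminhi : ∀ g ∈ T, Crosses s(v,w) g → qlo v g = qlo v es → qhi v g ≤ qhi v es := by
      intro g hg hc heq
      exact hmax2 g (Finset.mem_filter.mpr
        ⟨by rw [hCdef, Finset.mem_filter]; exact ⟨hg, hc⟩, by rw [heq, hesqlo]⟩)
    obtain ⟨A, B, hesrep, hABle⟩ := sorted_rep v es
    have hqloes : qlo v es = pv v A := by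
      rw [hesrep, qlo_mk, min_eq_left hABle]
    have hqhies : qhi v es = pv v B := by
      rw [hesrep, qhi_mk, max_eq_right hABle]
    have hvv : pv v v = 0 := pv_self v
    have hwlx : LinX (pv v v) (pv v w) (pv v A) (pv v B) := by
      rw [← cross_pv v v w A B (by rw [hvv]; omega) hABle, ← hesrep]; exact hescr
    rw [hvv] at hwlx
    unfold LinX at hwlx
    have hABw : 1 ≤ pv v A ∧ pv v A < pv v w ∧ pv v w < pv v B := by omega
    have hBn : pv v B ≤ n - 1 := by have := pv_lt v B; omega
    -- Step C : chords s(v,A) and s(v,B) cross nothing in T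
    have hAfree : ∀ h ∈ T, ¬ Crosses s(v,A) h := by
      intro h hh hc
      obtain ⟨X, Y, hrep, hXY⟩ := sorted_rep v h
      rw [hrep] at hc
      have hclx := (cross_pv v v A X Y (by rw [hvv]; omega) hXY).mp hc
      rw [hvv] at hclx; unfold LinX at hclx
      have hXA : 1 ≤ pv v X ∧ pv v X < pv v A ∧ pv v A < pv v Y := by omega
      rcases le_or_gt (pv v Y) (pv v w) with hyw | hyw
      · refine hT2 h hh es hesT ?_
        rw [hrep, hesrep, cross_pv v X Y A B hXY hABle]
        unfold LinX; omega
      · have hhc : Crosses s(v,w) h := by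
          rw [hrep, cross_pv v v w X Y (by rw [hvv]; omega) hXY, hvv]
          unfold LinX; omega
        have := hminlo h hh hhc
        rw [hqloes, hrep, qlo_mk, min_eq_left hXY] at this
        omega
    have hBfree : ∀ h ∈ T, ¬ Crosses s(v,B) h := by
      intro h hh hc
      obtain ⟨X, Y, hrep, hXY⟩ := sorted_rep v h
      rw [hrep] at hc
      have hclx := (cross_pv v v B X Y (by rw [hvv]; omega) hXY).mp hc
      rw [hvv] at hclx; unfold LinX at hclx
      have hXB : 1 ≤ pv v X ∧ pv v X < pv v B ∧ pv v B < pv v Y := by omega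
      rcases lt_trichotomy (pv v X) (pv v A) with hxa | hxa | hxa
      · have hhc : Crosses s(v,w) h := by
          rw [hrep, cross_pv v v w X Y (by rw [hvv]; omega) hXY, hvv]
          unfold LinX; omega
        have := hminlo h hh hhc
        rw [hqloes, hrep, qlo_mk, min_eq_left hXY] at this
        omega
      · have hhc : Crosses s(v,w) h := by
          rw [hrep, cross_pv v v w X Y (by rw [hvv]; omega) hXY, hvv]
          unfold LinX; omega
        have := hminhi h hh hhc (by rw [hqloes, hrep, qlo_mk, min_eq_left hXY]; omega)
        rw [hqhies, hrep, qhi_mk, max_eq_right hXY] at this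
        omega
      · refine hT2 h hh es hesT ?_
        rw [hrep, hesrep, cross_pv v X Y A B hXY hABle]
        unfold LinX; omega
    -- Step D: localization
    have hLoc : ∀ (z X Y : Fin n), s(X,Y) ∈ T → pv v X ≤ pv v Y →
        pv v A < pv v z → pv v z < pv v B → Crosses s(v,z) s(X,Y) →
        pv v A ≤ pv v X ∧ pv v Y ≤ pv v B := by
      intro z X Y hh hXY hza hzb hc
      have hclx := (cross_pv v v z X Y (by rw [hvv]; omega) hXY).mp hc
      rw [hvv] at hclx; unfold LinX at hclx
      have hXzY : 1 ≤ pv v X ∧ pv v X < pv v z ∧ pv v z < pv v Y := by omega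
      constructor
      · by_contra hcon
        push_neg at hcon
        apply hAfree _ hh
        rw [cross_pv v v A X Y (by rw [hvv]; omega) hXY, hvv]
        unfold LinX; omega
      · by_contra hcon
        push_neg at hcon
        apply hBfree _ hh
        rw [cross_pv v v B X Y (by rw [hvv]; omega) hXY, hvv]
        unfold LinX; omega
    -- Step E
    by_cases huq : ∀ g ∈ T, Crosses s(v,w) g → g = es
    · exact ⟨w, es, hesT, hescr, huq⟩
    · push_neg at huq
      obtain ⟨g0, hg0T, hg0c, hg0ne⟩ := huq
      set C' : Finset (Sym2 (Fin n)) := C.erase es with hC'def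
      have hC'ne : C'.Nonempty :=
        ⟨g0, Finset.mem_erase.mpr ⟨hg0ne, by rw [hCdef, Finset.mem_filter]; exact ⟨hg0T, hg0c⟩⟩⟩
      obtain ⟨e2, he2C, hmin2⟩ := C'.exists_min_image (qlo v) hC'ne
      have hC2ne' : (C'.filter (fun g => qlo v g = qlo v e2)).Nonempty :=
        ⟨e2, Finset.mem_filter.mpr ⟨he2C, rfl⟩⟩
      obtain ⟨hh, hhC2, hmax2'⟩ :=
        (C'.filter (fun g => qlo v g = qlo v e2)).exists_max_image (qhi v) hC2ne'
      have hhC' : hh ∈ C' := (Finset.mem_filter.mp hhC2).1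
      have hhqlo : qlo v hh = qlo v e2 := (Finset.mem_filter.mp hhC2).2
      have hminlo2 : ∀ g ∈ C', qlo v hh ≤ qlo v g := by
        intro g hg; rw [hhqlo]; exact hmin2 g hg
      have hminhi2 : ∀ g ∈ C', qlo v g = qlo v hh → qhi v g ≤ qhi v hh := by
        intro g hg heq
        exact hmax2' g (Finset.mem_filter.mpr ⟨hg, by rw [heq, hhqlo]⟩)
      have hhne : hh ≠ es := (Finset.mem_erase.mp hhC').1
      have hhC : hh ∈ C := (Finset.mem_erase.mp hhC').2
      have hhT : hh ∈ T := by rw [hCdef, Finset.mem_filter] at hhC; exact hhC.1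
      have hhcr : Crosses s(v,w) hh := by rw [hCdef, Finset.mem_filter] at hhC; exact hhC.2
      obtain ⟨X, Y, hrep, hXY⟩ := sorted_rep v hh
      have hqlohh : qlo v hh = pv v X := by rw [hrep, qlo_mk, min_eq_left hXY]
      have hqhihh : qhi v hh = pv v Y := by rw [hrep, qhi_mk, max_eq_right hXY]
      have hwlx2 : LinX 0 (pv v w) (pv v X) (pv v Y) := by
        have := (cross_pv v v w X Y (by rw [hvv]; omega) hXY).mp (by rw [← hrep]; exact hhcr)
        rwa [hvv] at this
      unfold LinX at hwlx2
      have hXwY : 1 ≤ pv v X ∧ pv v X < pv v w ∧ pv v w < pv v Y := by omega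
      have hloc0 := hLoc w X Y (by rw [← hrep]; exact hhT) hXY hABw.2.1 hABw.2.2
        (by rw [← hrep]; exact hhcr)
      have hne2 : pv v A < pv v X ∨ pv v Y < pv v B := by
        by_contra hcc
        push_neg at hcc
        have hXA : X = A := pv_inj v X A (by omega)
        have hYB : Y = B := pv_inj v Y B (by omega)
        apply hhne
        rw [hrep, hesrep, hXA, hYB]
      rcases hne2 with hcase | hcase
      · -- z := X
        refine ⟨X, es, hesT, ?_, ?_⟩
        · rw [hesrep, cross_pv v v X A B (by rw [hvv]; omega) hABle, hvv]
          unfold LinX; omega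
        · intro g hgT hgc
          by_contra hgne
          obtain ⟨X', Y', hgrep, hXY'⟩ := sorted_rep v g
          rw [hgrep] at hgc
          have hglx := (cross_pv v v X X' Y' (by rw [hvv]; omega) hXY').mp hgc
          rw [hvv] at hglx; unfold LinX at hglx
          have hgX : 1 ≤ pv v X' ∧ pv v X' < pv v X ∧ pv v X < pv v Y' := by omega
          have hloc1 := hLoc X X' Y' (by rw [← hgrep]; exact hgT) hXY'
            (by omega) (by omega) hgc
          have hgh : ¬ Crosses g hh := hT2 g hgT hh hhT
          rw [hgrep, hrep, cross_pv v X' Y' X Y hXY' hXY] at hgh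
          unfold LinX at hgh
          have hYY : pv v Y ≤ pv v Y' := by omega
          have hgwc : Crosses s(v,w) g := by
            rw [hgrep, cross_pv v v w X' Y' (by rw [hvv]; omega) hXY', hvv]
            unfold LinX; omega
          have hgC' : g ∈ C' := Finset.mem_erase.mpr
            ⟨hgne, by rw [hCdef, Finset.mem_filter]; exact ⟨hgT, hgwc⟩⟩
          have := hminlo2 g hgC'
          rw [hqlohh, hgrep, qlo_mk, min_eq_left hXY'] at this
          omega
      · -- z := Y
        refine ⟨Y, es, hesT, ?_, ?_⟩
        · rw [hesrep, cross_pv v v Y A B (by rw [hvv]; omega) hABle, hvv]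
          unfold LinX
          have : pv v A ≤ pv v X := hloc0.1
          omega
        · intro g hgT hgc
          by_contra hgne
          obtain ⟨X', Y', hgrep, hXY'⟩ := sorted_rep v g
          rw [hgrep] at hgc
          have hglx := (cross_pv v v Y X' Y' (by rw [hvv]; omega) hXY').mp hgc
          rw [hvv] at hglx; unfold LinX at hglx
          have hgY : 1 ≤ pv v X' ∧ pv v X' < pv v Y ∧ pv v Y < pv v Y' := by omega
          have hloc1 := hLoc Y X' Y' (by rw [← hgrep]; exact hgT) hXY'
            (by have := hloc0.1; omega) (by omega) hgc
          have hgh : ¬ Crosses g hh := hT2 g hgT hh hhT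
          rw [hgrep, hrep, cross_pv v X' Y' X Y hXY' hXY] at hgh
          unfold LinX at hgh
          have hXX : pv v X' ≤ pv v X := by omega
          have hgwc : Crosses s(v,w) g := by
            rw [hgrep, cross_pv v v w X' Y' (by rw [hvv]; omega) hXY', hvv]
            unfold LinX; omega
          have hgC' : g ∈ C' := Finset.mem_erase.mpr
            ⟨hgne, by rw [hCdef, Finset.mem_filter]; exact ⟨hgT, hgwc⟩⟩
          have hl := hminlo2 g hgC'
          rw [hqlohh, hgrep, qlo_mk, min_eq_left hXY'] at hl
          have heq : qlo v g = qlo v hh := by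
            rw [hqlohh, hgrep, qlo_mk, min_eq_left hXY']; omega
          have := hminhi2 g hgC' heq
          rw [hqhihh, hgrep, qhi_mk, max_eq_right hXY'] at this
          omega
  -- Final assembly
  obtain ⟨z, e, heT, hcr, huniq⟩ := KEY
  have hvv : pv v v = 0 := pv_self v
  obtain ⟨A, B, herep, hABle⟩ := sorted_rep v e
  have hlx : LinX 0 (pv v z) (pv v A) (pv v B) := by
    have := (cross_pv v v z A B (by rw [hvv]; omega) hABle).mp (by rw [← herep]; exact hcr)
    rwa [hvv] at this
  unfold LinX at hlx
  have hBn : pv v B ≤ n - 1 := by have := pv_lt v B; omega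
  have hfacts : 1 ≤ pv v A ∧ pv v A < pv v z ∧ pv v z < pv v B := by omega
  have hvnote : v ∉ e := by
    rw [herep, Sym2.mem_iff]
    rintro (rfl | rfl) <;> omega
  have hvinf : v ∈ s(v,z) := by rw [Sym2.mem_iff]; left; rfl
  have hfnotT : s(v,z) ∉ T := fun hfT => hT2 _ hfT e heT hcr
  have hfformat := format_of_pv v z (by omega) (by omega)
  have hfnotTe : s(v,z) ∉ T.erase e := fun hh => hfnotT (Finset.mem_of_mem_erase hh)
  refine ⟨e, s(v,z), heT, hfnotT, hvnote, hvinf, ⟨?_, ?_, ?_⟩, ?_⟩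
  · intro g hg
    rcases Finset.mem_insert.mp hg with hgf | hg
    · rw [hgf]; exact hfformat
    · exact hT1 g (Finset.mem_of_mem_erase hg)
  · intro g hg g' hg'
    rcases Finset.mem_insert.mp hg with hgf | hg <;>
      rcases Finset.mem_insert.mp hg' with hgf' | hg'
    · rw [hgf, hgf']; exact not_crosses_self _
    · rw [hgf]
      intro hc
      exact (Finset.ne_of_mem_erase hg') (huniq g' (Finset.mem_of_mem_erase hg') hc)
    · rw [hgf']
      intro hc
      exact (Finset.ne_of_mem_erase hg) (huniq g (Finset.mem_of_mem_erase hg) (crosses_comm hc))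
    · exact hT2 g (Finset.mem_of_mem_erase hg) g' (Finset.mem_of_mem_erase hg')
  · rw [Finset.card_insert_of_notMem hfnotTe, Finset.card_erase_of_mem heT, hT3]
    omega
  · have hfe : (insert s(v,z) (T.erase e)).filter (fun e' => v ∈ e') =
        insert s(v,z) (T.filter (fun e' => v ∈ e')) := by
      ext g
      simp only [Finset.mem_filter, Finset.mem_insert, Finset.mem_erase]
      constructor
      · rintro ⟨(rfl | ⟨hne, hgT⟩), hv⟩
        · left; rfl
        · right; exact ⟨hgT, hv⟩
      · rintro (rfl | ⟨hgT, hv⟩)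
        · exact ⟨Or.inl rfl, hvinf⟩
        · exact ⟨Or.inr ⟨fun hge => hvnote (hge ▸ hv), hgT⟩, hv⟩
    rw [hfe, Finset.card_insert_of_notMem (fun hc => hfnotT (Finset.mem_filter.mp hc).1)]
end
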